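/- arXiv:2102.10092 — 4 statements merged into one kernel-verified Lean document; each statement's English description precedes it below -/
import Mathlib

section
/- Let X be a nonempty shift space over a finite alphabet A. If every bispecial factor w ∈ L(X) satisfies #E(w) − #E^-(w) − #E^+(w) + 1 = 0, then p_X(n) = (p_X(1) − 1)·n + 1 for every n ≥ 0. -/
open Classical

/-! ### Basic shift-space definitions -/

/-- The shift map `S` on bi-infinite words over `A`. -/
def shiftMap (A : Type*) : (ℤ → A) → (ℤ → A) := fun x n => x (n + 1)

/-- The product topology on `ℤ → A`, each copy of `A` carrying the discrete topology. -/
def seqTop (A : Type*) : TopologicalSpace (ℤ → A) :=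
  @Pi.topologicalSpace ℤ (fun _ => A) (fun _ => ⊥)

/-- A shift space: a closed, shift-invariant subset of `A^ℤ`. -/
def IsShiftSpace {A : Type*} (X : Set (ℤ → A)) : Prop :=
  @IsClosed _ (seqTop A) X ∧ shiftMap A '' X = X

/-- A minimal shift space: the only closed shift-invariant subsets are `∅` and `X`. -/
def IsMinimalShift {A : Type*} (X : Set (ℤ → A)) : Prop :=
  IsShiftSpace X ∧
    ∀ Y : Set (ℤ → A), Y ⊆ X → @IsClosed _ (seqTop A) Y → shiftMap A '' Y = Y →
      Y = ∅ ∨ Y = X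

/-- The finite word `w` occurs as a factor of the bi-infinite word `x`. -/
def occursIn {A : Type*} (w : List A) (x : ℤ → A) : Prop :=
  ∃ i : ℤ, w = List.ofFn (fun k : Fin w.length => x (i + (k.val : ℤ)))

/-- The language of `X`: all finite factors of elements of `X`. -/
def language {A : Type*} (X : Set (ℤ → A)) : Set (List A) :=
  {w | ∃ x ∈ X, occursIn w x}

/-- The factor complexity `p_X(n)`. -/
noncomputable def complexity {A : Type*} (X : Set (ℤ → A)) (n : ℕ) : ℕ :=
  {w ∈ language X | w.length = n}.ncard

/-- Left extensions `E⁻(w)` of `w` in `X`. -/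
def extLeft {A : Type*} (X : Set (ℤ → A)) (w : List A) : Set A :=
  {a | (a :: w) ∈ language X}

/-- Right extensions `E⁺(w)` of `w` in `X`. -/
def extRight {A : Type*} (X : Set (ℤ → A)) (w : List A) : Set A :=
  {b | (w ++ [b]) ∈ language X}

/-- Bi-extensions `E(w)` of `w` in `X`. -/
def extBoth {A : Type*} (X : Set (ℤ → A)) (w : List A) : Set (A × A) :=
  {p | (p.1 :: (w ++ [p.2])) ∈ language X}

def LeftSpecial {A : Type*} (X : Set (ℤ → A)) (w : List A) : Prop :=
  2 ≤ (extLeft X w).ncard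

def RightSpecial {A : Type*} (X : Set (ℤ → A)) (w : List A) : Prop :=
  2 ≤ (extRight X w).ncard

def Bispecial {A : Type*} (X : Set (ℤ → A)) (w : List A) : Prop :=
  LeftSpecial X w ∧ RightSpecial X w

/-! ### Extension graphs -/

/-- The bipartite graph on `A ⊕ A` (left copy ⊕ right copy) whose edges are given
by a set `E` of pairs. -/
def pairGraph {A : Type*} (E : Set (A × A)) : SimpleGraph (A ⊕ A) :=
  SimpleGraph.fromRel (fun u v => ∃ a b, u = Sum.inl a ∧ v = Sum.inr b ∧ (a, b) ∈ E)

/-- The vertices of `A ⊕ A` incident to some edge of `E`. -/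
def pairSupport {A : Type*} (E : Set (A × A)) : Set (A ⊕ A) :=
  Sum.inl '' {a | ∃ b, (a, b) ∈ E} ∪ Sum.inr '' {b | ∃ a, (a, b) ∈ E}

/-- The vertex set of the extension graph of `w`: `E⁻(w) ⊔ E⁺(w)`. -/
def extVertices {A : Type*} (X : Set (ℤ → A)) (w : List A) : Set (A ⊕ A) :=
  Sum.inl '' extLeft X w ∪ Sum.inr '' extRight X w

/-- `w` is dendric in `X`: its extension graph is a tree. -/
def IsDendric {A : Type*} (X : Set (ℤ → A)) (w : List A) : Prop :=
  ((pairGraph (extBoth X w)).induce (extVertices X w)).IsTree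

/-- A dendric shift: a shift space all of whose factors are dendric. -/
def IsDendricShift {A : Type*} (X : Set (ℤ → A)) : Prop :=
  IsShiftSpace X ∧ ∀ w ∈ language X, IsDendric X w

/-- The graph with edge set `E` and vertices those incident to an edge, is a tree. -/
def restrictedIsTree {A : Type*} (E : Set (A × A)) : Prop :=
  ((pairGraph E).induce (pairSupport E)).IsTree

/-- An ordinary bispecial factor. -/
def Ordinary {A : Type*} (X : Set (ℤ → A)) (w : List A) : Prop :=
  Bispecial X w ∧ ∃ p ∈ extBoth X w, ∀ q ∈ extBoth X w, q.1 = p.1 ∨ q.2 = p.2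

/-- An Arnoux-Rauzy shift over `A`. -/
def IsArnouxRauzy {A : Type*} (X : Set (ℤ → A)) : Prop :=
  IsMinimalShift X ∧ ∀ n : ℕ, 1 ≤ n →
    (∃! u : List A, u ∈ language X ∧ u.length = n ∧ LeftSpecial X u) ∧
    (∃! v : List A, v ∈ language X ∧ v.length = n ∧ RightSpecial X v) ∧
    (∀ u ∈ language X, u.length = n → LeftSpecial X u → extLeft X u = Set.univ) ∧
    (∀ v ∈ language X, v.length = n → RightSpecial X v → extRight X v = Set.univ)

/-! ### Morphisms -/

/-- Apply a morphism (given by its images of letters) to a finite word. -/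
def applyWord {A B : Type*} (σ : A → List B) (w : List A) : List B :=
  (w.map σ).flatten

def NonErasing {A B : Type*} (σ : A → List B) : Prop := ∀ a, σ a ≠ []

/-- `σ` is strongly left proper with first letter `ℓ`: every `σ a` starts with `ℓ`
and `ℓ` occurs exactly once in `σ a`. -/
def StronglyLeftProper {A B : Type*} (σ : A → List B) (ℓ : B) : Prop :=
  ∀ a, ∃ w : List B, σ a = ℓ :: w ∧ ℓ ∉ w

/-- Apply a (non-erasing) morphism to a bi-infinite word, anchored so that
`σ (x 0)` starts at index `0`. -/
noncomputable def applyPoint {A B : Type*} [Nonempty B] (σ : A → List B) (x : ℤ → A) :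
    ℤ → B := fun m =>
  letI : Inhabited B := Classical.inhabited_of_nonempty inferInstance
  if 0 ≤ m then
    (applyWord σ (List.ofFn (fun k : Fin (m.toNat + 1) => x (k.val : ℤ)))).getD m.toNat default
  else
    let K := (-m).toNat
    let L := applyWord σ (List.ofFn (fun k : Fin K => x ((k.val : ℤ) - (K : ℤ))))
    L.getD ((L.length : ℤ) + m).toNat default

/-- The image of a shift space `X` under the morphism `σ`:
`Y = {S^k σ(x) : x ∈ X, 0 ≤ k < |σ(x₀)|}`. -/
def shiftImage {A B : Type*} [Nonempty B] (σ : A → List B) (X : Set (ℤ → A)) :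
    Set (ℤ → B) :=
  {y | ∃ x ∈ X, ∃ k : ℕ, k < (σ (x 0)).length ∧ y = (shiftMap B)^[k] (applyPoint σ x)}

/-- `u` is an extended image of `v` under the injective strongly left proper
morphism `σ` (with first letter `ℓ`). -/
def ExtendedImage {A B : Type*} [Nonempty B] (σ : A → List B) (ℓ : B)
    (X : Set (ℤ → A)) (v : List A) (u : List B) : Prop :=
  u ∈ language (shiftImage σ X) ∧ u ≠ [] ∧ ℓ ∈ u ∧ v ∈ language X ∧
    ∃ (s p : List B) (a b : A), u = s ++ applyWord σ v ++ p ∧ (a, b) ∈ extBoth X v ∧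
      s <:+ σ a ∧ s ≠ σ a ∧ p ≠ [] ∧ p <+: σ b

/-- `σ` is dendric preserving for the factor `v` of `X`: every bispecial extended
image of `v` is dendric in the image shift. -/
def DendricPreservingFor {A B : Type*} [Nonempty B] (σ : A → List B) (ℓ : B)
    (X : Set (ℤ → A)) (v : List A) : Prop :=
  ∀ u, ExtendedImage σ ℓ X v u → Bispecial (shiftImage σ X) u →
    IsDendric (shiftImage σ X) u

/-! ### Longest common prefixes and suffixes -/

/-- Longest common prefix of two words. -/
def lcp {B : Type*} [DecidableEq B] : List B → List B → List B
  | a :: l, b :: m => if a = b then a :: lcp l m else []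
  | _, _ => []

/-- Longest common suffix of two words. -/
def lcs {B : Type*} [DecidableEq B] (l m : List B) : List B :=
  (lcp l.reverse m.reverse).reverse

/-- `T⁻(σ)`: longest common suffixes of images of distinct letters. -/
def Tminus {A B : Type*} [DecidableEq B] (σ : A → List B) : Set (List B) :=
  {s | ∃ a₁ a₂ : A, a₁ ≠ a₂ ∧ s = lcs (σ a₁) (σ a₂)}

/-- `T⁺(σ)`: longest common prefixes of images of distinct letters. -/
def Tplus {A B : Type*} [DecidableEq B] (σ : A → List B) : Set (List B) :=
  {p | ∃ b₁ b₂ : A, b₁ ≠ b₂ ∧ p = lcp (σ b₁) (σ b₂)}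

/-- `T⁻_v(σ)`. -/
def TminusV {A B : Type*} [DecidableEq B] (σ : A → List B) (X : Set (ℤ → A))
    (v : List A) : Set (List B) :=
  {s | ∃ a₁ a₂ : A, a₁ ≠ a₂ ∧ a₁ ∈ extLeft X v ∧ a₂ ∈ extLeft X v ∧
    s = lcs (σ a₁) (σ a₂)}

/-- `T⁺_v(σ)`. -/
def TplusV {A B : Type*} [DecidableEq B] (σ : A → List B) (X : Set (ℤ → A))
    (v : List A) : Set (List B) :=
  {p | ∃ b₁ b₂ : A, b₁ ≠ b₂ ∧ b₁ ∈ extRight X v ∧ b₂ ∈ extRight X v ∧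
    p = lcp (σ b₁) (σ b₂)}

/-- `E⁻_{X,s}(v)`. -/
def extLeftS {A B : Type*} (σ : A → List B) (X : Set (ℤ → A)) (v : List A)
    (s : List B) : Set A :=
  {a ∈ extLeft X v | s <:+ σ a}

/-- `E⁺_{X,p}(v)`. -/
def extRightP {A B : Type*} (σ : A → List B) (ℓ : B) (X : Set (ℤ → A)) (v : List A)
    (p : List B) : Set A :=
  {b ∈ extRight X v | p <+: (σ b ++ [ℓ])}

/-- `E_{X,s,p}(v)`. -/
def extBothSP {A B : Type*} (σ : A → List B) (ℓ : B) (X : Set (ℤ → A)) (v : List A)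
    (s p : List B) : Set (A × A) :=
  {q ∈ extBoth X v | q.1 ∈ extLeftS σ X v s ∧ q.2 ∈ extRightP σ ℓ X v p}

/-- `σ` is left-invariant: `T⁻(σ)` is a singleton. -/
def LeftInvariant {A B : Type*} [DecidableEq B] (σ : A → List B) : Prop :=
  ∃ s, Tminus σ = {s}

/-- `σ` is right-invariant: `T⁺(σ)` is a singleton. -/
def RightInvariant {A B : Type*} [DecidableEq B] (σ : A → List B) : Prop :=
  ∃ p, Tplus σ = {p}

/-! ### The sets `C⁻` and `C⁺` -/

/-- Edges of `E` not incident to the left vertex `a`. -/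
def delLeft {A : Type*} (E : Set (A × A)) (a : A) : Set (A × A) := {p ∈ E | p.1 ≠ a}

/-- Edges of `E` not incident to the right vertex `b`. -/
def delRight {A : Type*} (E : Set (A × A)) (b : A) : Set (A × A) := {p ∈ E | p.2 ≠ b}

/-- `C⁻_X(v)`: letters `a` whose deletion (as a left vertex, removing resulting
isolated vertices) disconnects the extension graph of `v`. -/
def Cminus {A : Type*} (X : Set (ℤ → A)) (v : List A) : Set A :=
  {a | ¬ ((pairGraph (delLeft (extBoth X v) a)).induce
      (pairSupport (delLeft (extBoth X v) a))).Preconnected}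

/-- `C⁺_X(v)`. -/
def Cplus {A : Type*} (X : Set (ℤ → A)) (v : List A) : Set A :=
  {b | ¬ ((pairGraph (delRight (extBoth X v) b)).induce
      (pairSupport (delRight (extBoth X v) b))).Preconnected}

/-- `C⁻(X) = ⋃_{v ∈ L(X)} C⁻_X(v)`. -/
def CminusShift {A : Type*} (X : Set (ℤ → A)) : Set A :=
  {a | ∃ v ∈ language X, a ∈ Cminus X v}

/-- `C⁺(X)`. -/
def CplusShift {A : Type*} (X : Set (ℤ → A)) : Set A :=
  {b | ∃ v ∈ language X, b ∈ Cplus X v}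

/-! ### The ternary alphabet and the set `S₃` -/

/-- `α : 1↦1, 2↦12, 3↦13` (letters `1,2,3` are `0,1,2 : Fin 3`). -/
def mAlpha : Fin 3 → List (Fin 3) := ![[0], [0, 1], [0, 2]]

/-- `β : 1↦1, 2↦12, 3↦132`. -/
def mBeta : Fin 3 → List (Fin 3) := ![[0], [0, 1], [0, 2, 1]]

/-- `γ : 1↦1, 2↦12, 3↦123`. -/
def mGamma : Fin 3 → List (Fin 3) := ![[0], [0, 1], [0, 1, 2]]

/-- `δ⁽ᵏ⁾ : 1↦1, 2↦123^k, 3↦123^{k+1}`. -/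
def mDelta (k : ℕ) : Fin 3 → List (Fin 3) :=
  ![[0], [0, 1] ++ List.replicate k 2, [0, 1] ++ List.replicate (k + 1) 2]

/-- `ζ⁽ᵏ⁾ : 1↦13^k, 2↦12, 3↦13^{k+1}`. -/
def mZeta (k : ℕ) : Fin 3 → List (Fin 3) :=
  ![0 :: List.replicate k 2, [0, 1], 0 :: List.replicate (k + 1) 2]

/-- `η : 1↦13, 2↦12, 3↦123`. -/
def mEta : Fin 3 → List (Fin 3) := ![[0, 2], [0, 1], [0, 1, 2]]

/-- The set `S₃` of morphisms. -/
def S3Set : Set (Fin 3 → List (Fin 3)) :=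
  {mAlpha, mBeta, mGamma, mEta} ∪ {σ | ∃ k, 1 ≤ k ∧ (σ = mDelta k ∨ σ = mZeta k)}

/-- `S_LI = {α, γ}`. -/
def SLISet : Set (Fin 3 → List (Fin 3)) := {mAlpha, mGamma}

/-- `S_RI = {α, β}`. -/
def SRISet : Set (Fin 3 → List (Fin 3)) := {mAlpha, mBeta}

/-- The morphism induced by a permutation of the alphabet. -/
def permMorph (π : Equiv.Perm (Fin 3)) : Fin 3 → List (Fin 3) := fun a => [π a]

/-- Composition of morphisms (as substitutions). -/
def compMorph {A B C : Type*} (τ : B → List C) (σ : A → List B) : A → List C :=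
  fun a => applyWord τ (σ a)

/-- `Σ₃ T Σ₃` for a set `T` of morphisms of `A₃*`. -/
def SigmaSSigma (T : Set (Fin 3 → List (Fin 3))) : Set (Fin 3 → List (Fin 3)) :=
  {σ | ∃ (π π' : Equiv.Perm (Fin 3)) (τ : Fin 3 → List (Fin 3)), τ ∈ T ∧
    σ = compMorph (permMorph π) (compMorph τ (permMorph π'))}

/-! ### S-adic representations -/

/-- `prodMorph σ m n = σ_m ∘ σ_{m+1} ∘ ⋯ ∘ σ_{m+n-1}` (as substitutions). -/
def prodMorph {A : Type*} (σ : ℕ → A → List A) : ℕ → ℕ → A → List A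
  | _, 0 => fun a => [a]
  | m, n + 1 => compMorph (σ m) (prodMorph σ (m + 1) n)

/-- The language of level `n` of a directive sequence (0-indexed: `levelLang σ 0`
is the language of level 1 of the paper). -/
def levelLang {A : Type*} (σ : ℕ → A → List A) (n : ℕ) : Set (List A) :=
  {w | ∃ (m : ℕ) (a : A), 0 < m ∧ w <:+: prodMorph σ n m a}

/-- The shift space `X_σ^{(n+1)}` generated by the language of level `n+1`. -/
def levelShift {A : Type*} (σ : ℕ → A → List A) (n : ℕ) : Set (ℤ → A) :=
  {x | ∀ w, occursIn w x → w ∈ levelLang σ n}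

/-- The growth condition `max_a |σ_{[1,n)}(a)| → ∞`. -/
def SAdicGrowth {A : Type*} [Fintype A] (σ : ℕ → A → List A) : Prop :=
  Filter.Tendsto (fun n => Finset.univ.sup fun a : A => (prodMorph σ 0 n a).length)
    Filter.atTop Filter.atTop

/-- `σ` is an S-adic representation of `X`. -/
def IsSAdicRep {A : Type*} [Fintype A] (σ : ℕ → A → List A) (X : Set (ℤ → A)) : Prop :=
  SAdicGrowth σ ∧ X = levelShift σ 0

/-- Primitivity of a directive sequence. -/
def PrimitiveSeq {A : Type*} (σ : ℕ → A → List A) : Prop :=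
  ∀ n, ∃ m, 0 < m ∧ ∀ a b : A, a ∈ prodMorph σ n m b

/-- `X` is a shift space over `A₃`: every letter belongs to the language. -/
def ShiftOver3 (X : Set (ℤ → Fin 3)) : Prop := ∀ a : Fin 3, [a] ∈ language X

/-- A minimal dendric shift over `A₃`. -/
def MinimalDendric3 (X : Set (ℤ → Fin 3)) : Prop :=
  IsMinimalShift X ∧ (∀ w ∈ language X, IsDendric X w) ∧ ShiftOver3 X

/-! ### Induced transformations -/

/-- `I` is recurrent for `T`. -/
def RecurrentSet {Ω : Type*} (T : Ω → Ω) (I : Set Ω) : Prop :=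
  ∀ x ∈ I, ∃ n, 0 < n ∧ T^[n] x ∈ I

/-- First return time of `x` to `I` under `T`. -/
noncomputable def returnTime {Ω : Type*} (T : Ω → Ω) (I : Set Ω) (x : Ω) : ℕ :=
  sInf {n | 0 < n ∧ T^[n] x ∈ I}

/-- The transformation induced by `T` on `I`. -/
noncomputable def inducedMap {Ω : Type*} (T : Ω → Ω) (I : Set Ω) : Ω → Ω :=
  fun x => T^[returnTime T I x] x

/-- The Arnoux-Rauzy morphism `α_a : a ↦ a, b ↦ ab (b ≠ a)`. -/
def arAlpha {A : Type*} [DecidableEq A] (a : A) : A → List A :=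
  fun b => if b = a then [a] else [a, b]

/-- The Arnoux-Rauzy morphism `ᾱ_a : a ↦ a, b ↦ ba (b ≠ a)`. -/
def arAlphaBar {A : Type*} [DecidableEq A] (a : A) : A → List A :=
  fun b => if b = a then [a] else [b, a]

/-! ### Auxiliary lemmas for statement_1 -/

section Statement1Aux

lemma aux_occursIn_iff {A : Type*} {w : List A} {x : ℤ → A} :
    occursIn w x ↔ ∃ i : ℤ, ∀ (k : ℕ) (hk : k < w.length), w[k] = x (i + k) := by
  constructor
  · rintro ⟨i, hi⟩
    refine ⟨i, fun k hk => ?_⟩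
    have hk' : k < (List.ofFn (fun j : Fin w.length => x (i + (j.val : ℤ)))).length := by
      simpa using hk
    rw [List.getElem_of_eq hi hk, List.getElem_ofFn]
  · rintro ⟨i, hi⟩
    refine ⟨i, List.ext_getElem (by simp) fun k hk hk' => ?_⟩
    rw [List.getElem_ofFn]
    exact hi k hk

lemma aux_occursIn_nil {A : Type*} (x : ℤ → A) : occursIn ([] : List A) x :=
  ⟨0, by simp⟩

lemma aux_occursIn_of_cons {A : Type*} {a : A} {w : List A} {x : ℤ → A}
    (h : occursIn (a :: w) x) : occursIn w x := by
  rw [aux_occursIn_iff] at h ⊢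
  obtain ⟨i, hi⟩ := h
  refine ⟨i + 1, fun k hk => ?_⟩
  have h2 := hi (k + 1) (by simpa using Nat.succ_lt_succ hk)
  rw [List.getElem_cons_succ] at h2
  rw [h2]; congr 1; push_cast; ring

lemma aux_occursIn_of_concat {A : Type*} {b : A} {w : List A} {x : ℤ → A}
    (h : occursIn (w ++ [b]) x) : occursIn w x := by
  rw [aux_occursIn_iff] at h ⊢
  obtain ⟨i, hi⟩ := h
  refine ⟨i, fun k hk => ?_⟩
  have h2 := hi k (by simp; omega)
  rwa [List.getElem_append_left hk] at h2

variable {A : Type*} {X : Set (ℤ → A)}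

lemma aux_lang_of_cons {a : A} {w : List A} (h : (a :: w) ∈ language X) :
    w ∈ language X := by
  obtain ⟨x, hx, ho⟩ := h
  exact ⟨x, hx, aux_occursIn_of_cons ho⟩

lemma aux_lang_of_concat {b : A} {w : List A} (h : (w ++ [b]) ∈ language X) :
    w ∈ language X := by
  obtain ⟨x, hx, ho⟩ := h
  exact ⟨x, hx, aux_occursIn_of_concat ho⟩

lemma aux_lang_extend {w : List A} (hw : w ∈ language X) :
    ∃ a b : A, (a, b) ∈ extBoth X w := by
  obtain ⟨x, hx, ho⟩ := hw
  rw [aux_occursIn_iff] at ho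
  obtain ⟨i, hi⟩ := ho
  refine ⟨x (i - 1), x (i + w.length), x, hx, ?_⟩
  rw [aux_occursIn_iff]
  refine ⟨i - 1, fun k hk => ?_⟩
  match k with
  | 0 => simp
  | (k + 1) =>
    rw [List.getElem_cons_succ]
    simp only [List.length_cons, List.length_append, List.length_singleton,
      List.length_nil] at hk
    rcases lt_or_ge k w.length with hlt | hge
    · rw [List.getElem_append_left hlt, hi k hlt]
      congr 1; push_cast; ring
    · have hkeq : k = w.length := by omega
      subst hkeq
      rw [List.getElem_concat_length]
      · congr 1
        push_cast
        ring
      · rfl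

lemma aux_extBoth_left {a b : A} {w : List A} (h : (a, b) ∈ extBoth X w) :
    a ∈ extLeft X w :=
  aux_lang_of_concat (show ((a :: w) ++ [b]) ∈ language X by
    rw [List.cons_append]; exact h)

lemma aux_extBoth_right {a b : A} {w : List A} (h : (a, b) ∈ extBoth X w) :
    b ∈ extRight X w :=
  aux_lang_of_cons h

lemma aux_extLeft_lift {a : A} {w : List A} (h : a ∈ extLeft X w) :
    ∃ b, (a, b) ∈ extBoth X w := by
  obtain ⟨c, b, hcb⟩ := aux_lang_extend (show (a :: w) ∈ language X from h)
  refine ⟨b, ?_⟩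
  have : ((a :: w) ++ [b]) ∈ language X := aux_lang_of_cons hcb
  show (a :: (w ++ [b])) ∈ language X
  simpa [List.cons_append] using this

lemma aux_extRight_lift {b : A} {w : List A} (h : b ∈ extRight X w) :
    ∃ a, (a, b) ∈ extBoth X w := by
  obtain ⟨a, c, hac⟩ := aux_lang_extend (show (w ++ [b]) ∈ language X from h)
  refine ⟨a, ?_⟩
  have : ((a :: (w ++ [b])) ++ [c]) ∈ language X := by
    rw [List.cons_append]; exact hac
  exact aux_lang_of_concat this

lemma aux_extLeft_nonempty {w : List A} (hw : w ∈ language X) :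
    (extLeft X w).Nonempty := by
  obtain ⟨a, b, hab⟩ := aux_lang_extend hw
  exact ⟨a, aux_extBoth_left hab⟩

lemma aux_extRight_nonempty {w : List A} (hw : w ∈ language X) :
    (extRight X w).Nonempty := by
  obtain ⟨a, b, hab⟩ := aux_lang_extend hw
  exact ⟨b, aux_extBoth_right hab⟩

end Statement1Aux

section Statement1Count

variable {A : Type*} [Fintype A]

lemma aux_lang_len_finite (X : Set (ℤ → A)) (n : ℕ) :
    {w ∈ language X | w.length = n}.Finite := by
  apply Set.Finite.subset (Set.finite_range (List.ofFn : (Fin n → A) → List A))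
  rintro w ⟨-, hl⟩
  subst hl
  exact ⟨w.get, List.ofFn_get w⟩

noncomputable def auxLangFin (X : Set (ℤ → A)) (n : ℕ) : Finset (List A) :=
  (aux_lang_len_finite X n).toFinset

lemma aux_mem_langFin {X : Set (ℤ → A)} {n : ℕ} {w : List A} :
    w ∈ auxLangFin X n ↔ w ∈ language X ∧ w.length = n := by
  simp [auxLangFin, Set.Finite.mem_toFinset]

lemma aux_complexity_eq (X : Set (ℤ → A)) (n : ℕ) :
    complexity X n = (auxLangFin X n).card :=
  Set.ncard_eq_toFinset_card _ (aux_lang_len_finite X n)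

lemma aux_card_two (X : Set (ℤ → A)) (n : ℕ) :
    (auxLangFin X (n + 2)).card = ∑ w ∈ auxLangFin X n, (extBoth X w).ncard := by
  have himg : auxLangFin X (n + 2) = (auxLangFin X n).biUnion
      (fun w => ((Set.toFinite (extBoth X w)).toFinset).image
        (fun p : A × A => p.1 :: (w ++ [p.2]))) := by
    ext u
    simp only [Finset.mem_biUnion, Finset.mem_image, Set.Finite.mem_toFinset,
      aux_mem_langFin]
    constructor
    · rintro ⟨hu, hlen⟩
      match u with
      | [] => simp at hlen
      | a :: r =>
        have hr : r ≠ [] := by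
          intro hre; rw [hre] at hlen; simp at hlen
        have hrw : r.dropLast ++ [r.getLast hr] = r := List.dropLast_append_getLast hr
        refine ⟨r.dropLast, ⟨?_, ?_⟩, (a, r.getLast hr), ?_, ?_⟩
        · exact aux_lang_of_concat (by rw [hrw]; exact aux_lang_of_cons hu)
        · have : r.length = n + 1 := by simpa using hlen
          simp [this]
        · show (a :: (r.dropLast ++ [r.getLast hr])) ∈ language X
          rw [hrw]; exact hu
        · simp only []
          rw [hrw]
    · rintro ⟨w, ⟨hw, hlen⟩, ⟨a, b⟩, hab, rfl⟩
      refine ⟨hab, by simp [hlen]⟩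
  rw [himg, Finset.card_biUnion]
  · refine Finset.sum_congr rfl fun w hw => ?_
    rw [Finset.card_image_of_injOn, Set.ncard_eq_toFinset_card _ (Set.toFinite _)]
    rintro ⟨a, b⟩ _ ⟨a', b'⟩ _ heq
    simp only [List.cons.injEq] at heq
    obtain ⟨rfl, heq2⟩ := heq
    have := List.append_cancel_left heq2
    simp only [List.cons.injEq] at this
    simp [this.1]
  · intro w hw w' hw' hne
    rw [Function.onFun, Finset.disjoint_left]
    rintro u hu hu'
    simp only [Finset.mem_image, Set.Finite.mem_toFinset] at hu hu'
    obtain ⟨⟨a, b⟩, -, rfl⟩ := hu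
    obtain ⟨⟨a', b'⟩, -, heq⟩ := hu'
    simp only [List.cons.injEq] at heq
    have hl : w'.length = w.length := by
      rw [(aux_mem_langFin.1 hw).2, (aux_mem_langFin.1 hw').2]
    exact hne ((List.append_inj heq.2 hl).1.symm)

lemma aux_card_one_right (X : Set (ℤ → A)) (n : ℕ) :
    (auxLangFin X (n + 1)).card = ∑ w ∈ auxLangFin X n, (extRight X w).ncard := by
  have himg : auxLangFin X (n + 1) = (auxLangFin X n).biUnion
      (fun w => ((Set.toFinite (extRight X w)).toFinset).image
        (fun b : A => w ++ [b])) := by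
    ext u
    simp only [Finset.mem_biUnion, Finset.mem_image, Set.Finite.mem_toFinset,
      aux_mem_langFin]
    constructor
    · rintro ⟨hu, hlen⟩
      have hr : u ≠ [] := by intro hre; rw [hre] at hlen; simp at hlen
      have hrw : u.dropLast ++ [u.getLast hr] = u := List.dropLast_append_getLast hr
      refine ⟨u.dropLast, ⟨?_, ?_⟩, u.getLast hr, ?_, hrw⟩
      · exact aux_lang_of_concat (by rw [hrw]; exact hu)
      · simp [hlen]
      · show (u.dropLast ++ [u.getLast hr]) ∈ language X
        rw [hrw]; exact hu
    · rintro ⟨w, ⟨hw, hlen⟩, b, hb, rfl⟩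
      exact ⟨hb, by simp [hlen]⟩
  rw [himg, Finset.card_biUnion]
  · refine Finset.sum_congr rfl fun w hw => ?_
    rw [Finset.card_image_of_injOn, Set.ncard_eq_toFinset_card _ (Set.toFinite _)]
    intro b _ b' _ heq
    have := List.append_cancel_left heq
    simp only [List.cons.injEq] at this
    exact this.1
  · intro w hw w' hw' hne
    rw [Function.onFun, Finset.disjoint_left]
    rintro u hu hu'
    simp only [Finset.mem_image, Set.Finite.mem_toFinset] at hu hu'
    obtain ⟨b, -, rfl⟩ := hu
    obtain ⟨b', -, heq⟩ := hu'
    have hl : w'.length = w.length := by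
      rw [(aux_mem_langFin.1 hw).2, (aux_mem_langFin.1 hw').2]
    exact hne ((List.append_inj heq hl).1.symm)

lemma aux_card_one_left (X : Set (ℤ → A)) (n : ℕ) :
    (auxLangFin X (n + 1)).card = ∑ w ∈ auxLangFin X n, (extLeft X w).ncard := by
  have himg : auxLangFin X (n + 1) = (auxLangFin X n).biUnion
      (fun w => ((Set.toFinite (extLeft X w)).toFinset).image
        (fun a : A => a :: w)) := by
    ext u
    simp only [Finset.mem_biUnion, Finset.mem_image, Set.Finite.mem_toFinset,
      aux_mem_langFin]
    constructor
    · rintro ⟨hu, hlen⟩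
      match u with
      | [] => simp at hlen
      | a :: r =>
        refine ⟨r, ⟨aux_lang_of_cons hu, by simpa using hlen⟩, a, hu, rfl⟩
    · rintro ⟨w, ⟨hw, hlen⟩, a, ha, rfl⟩
      exact ⟨ha, by simp [hlen]⟩
  rw [himg, Finset.card_biUnion]
  · refine Finset.sum_congr rfl fun w hw => ?_
    rw [Finset.card_image_of_injOn, Set.ncard_eq_toFinset_card _ (Set.toFinite _)]
    intro a _ a' _ heq
    simpa using heq
  · intro w hw w' hw' hne
    rw [Function.onFun, Finset.disjoint_left]
    rintro u hu hu'
    simp only [Finset.mem_image, Set.Finite.mem_toFinset] at hu hu'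
    obtain ⟨a, -, rfl⟩ := hu
    obtain ⟨a', -, heq⟩ := hu'
    simp only [List.cons.injEq] at heq
    exact hne heq.2.symm

lemma aux_key {X : Set (ℤ → A)}
    (h : ∀ w ∈ language X, Bispecial X w →
      ((extBoth X w).ncard : ℤ) - (extLeft X w).ncard - (extRight X w).ncard + 1 = 0)
    {w : List A} (hw : w ∈ language X) :
    ((extBoth X w).ncard : ℤ) + 1 = (extLeft X w).ncard + (extRight X w).ncard := by
  have hLne := aux_extLeft_nonempty hw
  have hRne := aux_extRight_nonempty hw
  by_cases hL : LeftSpecial X w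
  · by_cases hR : RightSpecial X w
    · have := h w hw ⟨hL, hR⟩; linarith
    · simp only [RightSpecial, not_le] at hR
      have hcard : (extRight X w).ncard = 1 :=
        le_antisymm (by omega) ((Set.ncard_pos (Set.toFinite _)).2 hRne)
      have himg : Prod.fst '' extBoth X w = extLeft X w := by
        ext a
        constructor
        · rintro ⟨⟨a', b⟩, hp, rfl⟩
          exact aux_extBoth_left hp
        · intro ha
          obtain ⟨b, hb⟩ := aux_extLeft_lift ha
          exact ⟨(a, b), hb, rfl⟩
      have hinj : Set.InjOn Prod.fst (extBoth X w) := by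
        rintro ⟨a, b⟩ hp ⟨a', b'⟩ hq (rfl : a = a')
        have hb : b ∈ extRight X w := aux_extBoth_right hp
        have hb' : b' ∈ extRight X w := aux_extBoth_right hq
        have hbb : b = b' := by
          by_contra hne
          have hsub : ({b, b'} : Set A) ⊆ extRight X w := by
            intro c hc
            rcases hc with rfl | rfl
            · exact hb
            · exact hb'
          have := Set.ncard_le_ncard hsub (Set.toFinite _)
          rw [Set.ncard_pair hne] at this
          omega
        rw [hbb]
      have hcard2 := Set.ncard_image_of_injOn hinj
      rw [himg] at hcard2
      rw [hcard, ← hcard2]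
      push_cast
      ring
  · simp only [LeftSpecial, not_le] at hL
    have hcard : (extLeft X w).ncard = 1 :=
      le_antisymm (by omega) ((Set.ncard_pos (Set.toFinite _)).2 hLne)
    have himg : Prod.snd '' extBoth X w = extRight X w := by
      ext b
      constructor
      · rintro ⟨⟨a, b'⟩, hp, rfl⟩
        exact aux_extBoth_right hp
      · intro hb
        obtain ⟨a, ha⟩ := aux_extRight_lift hb
        exact ⟨(a, b), ha, rfl⟩
    have hinj : Set.InjOn Prod.snd (extBoth X w) := by
      rintro ⟨a, b⟩ hp ⟨a', b'⟩ hq (rfl : b = b')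
      have ha : a ∈ extLeft X w := aux_extBoth_left hp
      have ha' : a' ∈ extLeft X w := aux_extBoth_left hq
      have haa : a = a' := by
        by_contra hne
        have hsub : ({a, a'} : Set A) ⊆ extLeft X w := by
          intro c hc
          rcases hc with rfl | rfl
          · exact ha
          · exact ha'
        have := Set.ncard_le_ncard hsub (Set.toFinite _)
        rw [Set.ncard_pair hne] at this
        omega
      rw [haa]
    have hcard2 := Set.ncard_image_of_injOn hinj
    rw [himg] at hcard2
    rw [hcard, ← hcard2]
    push_cast
    ring

end Statement1Count

/-- Proposition 2.1, second part. -/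
theorem statement_1 {A : Type*} [Fintype A] (X : Set (ℤ → A)) (hX : IsShiftSpace X)
    (hne : X.Nonempty)
    (h : ∀ w ∈ language X, Bispecial X w →
      ((extBoth X w).ncard : ℤ) - (extLeft X w).ncard - (extRight X w).ncard + 1 = 0) :
    ∀ n : ℕ, (complexity X n : ℤ) = ((complexity X 1 : ℤ) - 1) * n + 1 := by
  have hc0 : complexity X 0 = 1 := by
    have hset : {w ∈ language X | w.length = 0} = {([] : List A)} := by
      ext w
      simp only [Set.mem_setOf_eq, Set.mem_singleton_iff, List.length_eq_zero_iff]
      constructor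
      · exact fun hw => hw.2
      · rintro rfl
        obtain ⟨x, hx⟩ := hne
        exact ⟨⟨x, hx, aux_occursIn_nil x⟩, rfl⟩
    rw [complexity, hset, Set.ncard_singleton]
  have hrec : ∀ n : ℕ,
      (complexity X (n + 2) : ℤ) + complexity X n = 2 * complexity X (n + 1) := by
    intro n
    have e2 : (complexity X (n + 2) : ℤ)
        = ∑ w ∈ auxLangFin X n, ((extBoth X w).ncard : ℤ) := by
      rw [aux_complexity_eq, aux_card_two]; push_cast; rfl
    have e1r : (complexity X (n + 1) : ℤ)
        = ∑ w ∈ auxLangFin X n, ((extRight X w).ncard : ℤ) := by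
      rw [aux_complexity_eq, aux_card_one_right]; push_cast; rfl
    have e1l : (complexity X (n + 1) : ℤ)
        = ∑ w ∈ auxLangFin X n, ((extLeft X w).ncard : ℤ) := by
      rw [aux_complexity_eq, aux_card_one_left]; push_cast; rfl
    have e0 : (complexity X n : ℤ) = ∑ w ∈ auxLangFin X n, (1 : ℤ) := by
      rw [aux_complexity_eq]; simp
    rw [two_mul]
    nth_rewrite 2 [e1r]
    rw [e1l, e2, e0, ← Finset.sum_add_distrib, ← Finset.sum_add_distrib]
    refine Finset.sum_congr rfl fun w hw => ?_
    have := aux_key h (aux_mem_langFin.1 hw).1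
    linarith
  set c : ℤ := (complexity X 1 : ℤ) - 1 with hc
  have main : ∀ m : ℕ, (complexity X m : ℤ) = c * m + 1 ∧
      (complexity X (m + 1) : ℤ) = c * (m + 1) + 1 := by
    intro m
    induction m with
    | zero =>
      constructor
      · simp [hc0]
      · rw [hc]; push_cast; ring
    | succ k ih =>
      refine ⟨ih.2, ?_⟩
      have hr := hrec k
      have h1 := ih.1
      have h2 := ih.2
      push_cast at hr h1 h2 ⊢
      linear_combination hr - h1 + 2 * h2
  intro n
  exact (main n).1
end

section
/- Let X be a shift space over A, σ : A* → B* an injective strongly left proper morphism with first letter ℓ, Y the image of X under σ, and u a nonempty word of L(Y). If ℓ does not occur in u, then there exists b ∈ A such that u is a non-prefix factor of σ(b), i.e. σ(b) = x u y for some nonempty word x and some word y. If ℓ occurs in u, then there exists a unique triple (s, v, p) ∈ B* × L(X) × B* such that u = sσ(v)p and there exists a pair (a,b) ∈ E_X(v) with s a proper suffix of σ(a) and p a nonempty prefix of σ(b). -/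
open Classical

section WordAux
variable {A B : Type*} (σ : A → List B) {ℓ : B}

lemma applyWord_nil : applyWord σ ([] : List A) = [] := rfl

lemma applyWord_cons (a : A) (w : List A) :
    applyWord σ (a :: w) = σ a ++ applyWord σ w := by simp [applyWord]

lemma applyWord_append (v w : List A) :
    applyWord σ (v ++ w) = applyWord σ v ++ applyWord σ w := by simp [applyWord]

lemma length_le_applyWord (hne : ∀ a, σ a ≠ []) :
    ∀ w : List A, w.length ≤ (applyWord σ w).length := by
  intro w
  induction w with
  | nil => simp [applyWord_nil]
  | cons a w ih =>
    rw [applyWord_cons]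
    have : 1 ≤ (σ a).length := List.length_pos_iff.mpr (hne a)
    simp only [List.length_cons, List.length_append]
    omega

variable (hslp : StronglyLeftProper σ ℓ)
include hslp

lemma slp_ne_nil (a : A) : σ a ≠ [] := by
  obtain ⟨w, hw, -⟩ := hslp a; simp [hw]

lemma applyWord_head (w : List A) (hw : w ≠ []) : ∃ t, applyWord σ w = ℓ :: t := by
  cases w with
  | nil => exact absurd rfl hw
  | cons c w' =>
    obtain ⟨t, ht, -⟩ := hslp c
    exact ⟨t ++ applyWord σ w', by rw [applyWord_cons, ht]; rfl⟩

lemma lemma_one :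
    ∀ (w : List A) (x y u : List B), applyWord σ w = x ++ u ++ y → u ≠ [] → ℓ ∉ u →
    ∃ b x' y', x' ≠ [] ∧ σ b = x' ++ u ++ y' := by
  intro w
  induction w with
  | nil =>
    intro x y u h hne _
    rw [applyWord_nil] at h
    obtain ⟨h1, h2⟩ := List.append_eq_nil_iff.mp h.symm
    exact absurd (List.append_eq_nil_iff.mp h1).2 hne
  | cons c w ih =>
    intro x y u h hne hl
    rw [applyWord_cons, List.append_assoc] at h
    rcases List.append_eq_append_iff.mp h with ⟨a', rfl, h2⟩ | ⟨c', hc, h2⟩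
    · exact ih a' y u (by rw [h2, ← List.append_assoc]) hne hl
    · have hxne : x ≠ [] := by
        rintro rfl
        rw [List.nil_append] at hc
        obtain ⟨t, ht, -⟩ := hslp c
        cases u with
        | nil => exact hne rfl
        | cons u0 u' =>
          rcases List.append_eq_append_iff.mp h2 with ⟨d, hd, -⟩ | ⟨d, hd, -⟩
          · rw [hd] at hc
            rw [ht] at hc
            injection hc with h1 _
            exact hl (by rw [← h1]; exact List.mem_cons_self)
          · cases d with
            | nil =>
              rw [List.append_nil] at hd
              rw [← hd, ht] at hc
              injection hc with h1 _
              exact hl (by rw [← h1]; exact List.mem_cons_self)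
            | cons d0 d' =>
              -- u = c' ++ d0::d' ; σ c = c' ... anyway u starts with head of c' or d
              -- simpler: u0 is the head of c' ++ applyWord σ w = σ c ++ applyWord σ w
              rw [ht] at hc
              -- hc : ℓ :: t = c', so u = c' ++ d has head ℓ
              rw [hd, ← hc] at hl
              exact hl List.mem_cons_self
      rcases List.append_eq_append_iff.mp h2 with ⟨d, hd, -⟩ | ⟨d, hd, hw'⟩
      · exact ⟨c, x, d, hxne, by rw [hc, hd, List.append_assoc]⟩
      · cases d with
        | nil =>
          rw [List.append_nil] at hd
          exact ⟨c, x, [], hxne, by rw [hc, hd, List.append_nil]⟩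
        | cons d0 d' =>
          exfalso
          have hwne : w ≠ [] := by
            rintro rfl
            rw [applyWord_nil] at hw'
            exact absurd hw'.symm (by simp)
          obtain ⟨t, ht⟩ := applyWord_head σ hslp w hwne
          rw [ht] at hw'
          injection hw' with h1 _
          rw [hd] at hl
          exact hl (List.mem_append_right _ (by rw [← h1]; exact List.mem_cons_self))

lemma lemma_three :
    ∀ (w : List A) (d y : List B), applyWord σ w = d ++ y → d ≠ [] →
    ∃ v b p w₂, w = v ++ b :: w₂ ∧ d = applyWord σ v ++ p ∧ p ≠ [] ∧ p <+: σ b := by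
  intro w
  induction w with
  | nil =>
    intro d y h hd
    rw [applyWord_nil] at h
    exact absurd (List.append_eq_nil_iff.mp h.symm).1 hd
  | cons c w ih =>
    intro d y h hd
    rw [applyWord_cons] at h
    rcases List.append_eq_append_iff.mp h with ⟨a', hda, hw'⟩ | ⟨c', hc, hy⟩
    · by_cases ha : a' = []
      · subst ha
        rw [List.append_nil] at hda
        exact ⟨[], c, σ c, w, rfl, by rw [hda, applyWord_nil, List.nil_append],
          slp_ne_nil σ hslp c, List.prefix_refl _⟩
      · obtain ⟨v, b, p, w₂, rfl, hdec, hp, hpre⟩ := ih a' y hw' ha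
        exact ⟨c :: v, b, p, w₂, rfl,
          by rw [hda, hdec, applyWord_cons, List.append_assoc], hp, hpre⟩
    · exact ⟨[], c, d, w, rfl, by rw [applyWord_nil, List.nil_append], hd, ⟨c', hc.symm⟩⟩

lemma lemma_two :
    ∀ (w : List A) (x y u : List B), applyWord σ w = x ++ u ++ y → ℓ ∈ u → x ≠ [] →
    ∃ w₁ a v b w₂ s p, w = w₁ ++ a :: (v ++ b :: w₂) ∧ u = s ++ applyWord σ v ++ p ∧
      s <:+ σ a ∧ s ≠ σ a ∧ p ≠ [] ∧ p <+: σ b := by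
  intro w
  induction w with
  | nil =>
    intro x y u h hl hx
    rw [applyWord_nil] at h
    exact absurd (List.append_eq_nil_iff.mp (List.append_eq_nil_iff.mp h.symm).1).1 hx
  | cons c w ih =>
    intro x y u h hl hx
    have hune : u ≠ [] := by rintro rfl; simp at hl
    rw [applyWord_cons, List.append_assoc] at h
    rcases List.append_eq_append_iff.mp h with ⟨a', hxa, hw'⟩ | ⟨c', hc, h2⟩
    · by_cases ha : a' = []
      · subst ha
        rw [List.nil_append] at hw'
        obtain ⟨v, b, p, w₂, rfl, hu, hp, hpre⟩ := lemma_three σ hslp w u y hw' hune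
        exact ⟨[], c, v, b, w₂, [], p, rfl, by rw [List.nil_append, hu],
          List.nil_suffix, Ne.symm (slp_ne_nil σ hslp c), hp, hpre⟩
      · obtain ⟨w₁, a, v, b, w₂, s, p, hw, h3, h4, h5, h6, h7⟩ :=
          ih a' y u (by rw [hw', ← List.append_assoc]) hl ha
        exact ⟨c :: w₁, a, v, b, w₂, s, p, by rw [hw]; rfl, h3, h4, h5, h6, h7⟩
    · obtain ⟨t, ht, hlt⟩ := hslp c
      obtain ⟨x0, x', rfl⟩ : ∃ x0 x', x = x0 :: x' := by
        cases x with
        | nil => exact absurd rfl hx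
        | cons x0 x' => exact ⟨x0, x', rfl⟩
      have hc2 : t = x' ++ c' := by
        have h' := hc
        rw [ht, List.cons_append] at h'
        exact (List.cons.inj h').2
      have hlc' : ℓ ∉ c' := by
        intro hm
        apply hlt
        rw [hc2]
        exact List.mem_append_right _ hm
      have hlen : c'.length < (σ c).length := by
        rw [hc]; simp
      rcases List.append_eq_append_iff.mp h2 with ⟨d, hcd, -⟩ | ⟨d, hud, hw'⟩
      · exact absurd (hcd ▸ List.mem_append_left d hl) hlc'
      · have hld : ℓ ∈ d := by
          rcases List.mem_append.mp (hud ▸ hl) with h' | h'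
          · exact absurd h' hlc'
          · exact h'
        have hdne : d ≠ [] := by rintro rfl; simp at hld
        obtain ⟨v, b, p, w₂, rfl, hdd, hp, hpre⟩ := lemma_three σ hslp w d y hw' hdne
        refine ⟨[], c, v, b, w₂, c', p, rfl, ?_, ⟨x0 :: x', hc.symm⟩, ?_, hp, hpre⟩
        · rw [hud, hdd, List.append_assoc]
        · intro hcs
          rw [hcs] at hlen
          omega

omit hslp in
lemma uniq_split_first :
    ∀ (s s' r r' : List B), ℓ ∉ s → ℓ ∉ s' → s ++ ℓ :: r = s' ++ ℓ :: r' →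
      s = s' ∧ r = r' := by
  intro s
  induction s with
  | nil =>
    intro s' r r' _ hs' h
    cases s' with
    | nil =>
      rw [List.nil_append, List.nil_append] at h
      injection h with _ h2
      exact ⟨rfl, h2⟩
    | cons b s'' =>
      rw [List.nil_append] at h
      injection h with h1 _
      exact absurd (h1 ▸ (List.mem_cons_self : b ∈ b :: s'')) hs'
  | cons a s ih =>
    intro s' r r' hs hs' h
    cases s' with
    | nil =>
      rw [List.nil_append] at h
      injection h with h1 _
      exact absurd (h1.symm ▸ (List.mem_cons_self : a ∈ a :: s)) hs
    | cons b s'' =>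
      injection h with h1 h2
      have hs2 : ℓ ∉ s := fun hm => hs (List.mem_cons_of_mem _ hm)
      have hs2' : ℓ ∉ s'' := fun hm => hs' (List.mem_cons_of_mem _ hm)
      obtain ⟨e1, e2⟩ := ih s'' r r' hs2 hs2' h2
      exact ⟨by rw [h1, e1], e2⟩

omit hslp in
lemma uniq_split_last :
    ∀ (v r v' r' : List B), ℓ ∉ r → ℓ ∉ r' → v ++ ℓ :: r = v' ++ ℓ :: r' →
      v = v' ∧ r = r' := by
  intro v
  induction v with
  | nil =>
    intro r v' r' hr hr' h
    cases v' with
    | nil =>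
      rw [List.nil_append, List.nil_append] at h
      injection h with _ h2
      exact ⟨rfl, h2⟩
    | cons b v'' =>
      rw [List.nil_append] at h
      injection h with _ h2
      exact absurd (h2 ▸ (List.mem_append_right v'' (List.mem_cons_self : ℓ ∈ ℓ :: r'))) hr
  | cons a v ih =>
    intro r v' r' hr hr' h
    cases v' with
    | nil =>
      rw [List.nil_append] at h
      injection h with _ h2
      exact absurd (h2.symm ▸ (List.mem_append_right v (List.mem_cons_self : ℓ ∈ ℓ :: r))) hr'
    | cons b v'' =>
      injection h with h1 h2
      obtain ⟨e1, e2⟩ := ih r v'' r' hr hr' h2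
      exact ⟨by rw [h1, e1], e2⟩

end WordAux

section PointAux
variable {A B : Type*}

lemma shiftMap_iterate (k : ℕ) (z : ℤ → B) (m : ℤ) :
    (shiftMap B)^[k] z m = z (m + k) := by
  induction k generalizing z with
  | zero => simp
  | succ n ih =>
    rw [Function.iterate_succ_apply, ih (shiftMap B z)]
    show z (m + n + 1) = z (m + (n + 1 : ℕ))
    congr 1
    push_cast
    ring

lemma getElem_idx_congr {l : List B} {i j : ℕ} (h : i = j) (hi : i < l.length) :
    l[i]'hi = l[j]'(h ▸ hi) := by subst h; rfl

lemma suffix_getElem_end {l₁ l₂ : List B} (h : l₁ <:+ l₂) {t : ℕ} (ht : 1 ≤ t)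
    (h₁ : t ≤ l₁.length) :
    l₁[l₁.length - t]'(by omega) =
      l₂[l₂.length - t]'(by have := h.length_le; omega) := by
  obtain ⟨q, rfl⟩ := h
  rw [List.getElem_append_right (by simp; omega)]
  exact getElem_idx_congr (by simp; omega) _

variable (σ : A → List B) (x0 : ℤ → A)

lemma Qword_prefix (hne : ∀ a, σ a ≠ []) {m n : ℕ} (h : m ≤ n) :
    applyWord σ (List.ofFn (fun k : Fin m => x0 (k.val : ℤ))) <+:
      applyWord σ (List.ofFn (fun k : Fin n => x0 (k.val : ℤ))) := by
  induction n, h using Nat.le_induction with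
  | base => exact List.prefix_refl _
  | succ n hmn ih =>
    refine ih.trans ?_
    rw [List.ofFn_succ' (fun k : Fin (n+1) => x0 (k.val : ℤ))]
    simp only [Fin.coe_castSucc, Fin.val_last, List.concat_eq_append]
    rw [applyWord_append]
    exact List.prefix_append _ _

lemma Pword_suffix {m n : ℕ} (h : m ≤ n) :
    applyWord σ (List.ofFn (fun k : Fin m => x0 ((k.val : ℤ) - (m : ℤ)))) <:+
      applyWord σ (List.ofFn (fun k : Fin n => x0 ((k.val : ℤ) - (n : ℤ)))) := by
  induction n, h using Nat.le_induction with
  | base => exact List.suffix_refl _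
  | succ n hmn ih =>
    refine ih.trans ?_
    rw [List.ofFn_succ (f := fun k : Fin (n+1) => x0 ((k.val : ℤ) - ((n+1 : ℕ) : ℤ)))]
    have heq : (fun i : Fin n => x0 (((i.succ : Fin (n+1)).val : ℤ) - ((n+1 : ℕ) : ℤ))) =
        fun i : Fin n => x0 ((i.val : ℤ) - (n : ℤ)) := by
      funext i
      congr 1
      push_cast [Fin.val_succ]
      ring
    rw [heq, applyWord_cons]
    exact List.suffix_append _ _

variable [Nonempty B]

lemma applyPoint_nonneg (hne : ∀ a, σ a ≠ []) (m : ℤ) (hm : 0 ≤ m) (n : ℕ)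
    (hn : m.toNat + 1 ≤ n)
    (hlt : m.toNat < (applyWord σ (List.ofFn (fun k : Fin n => x0 (k.val : ℤ)))).length) :
    applyPoint σ x0 m =
      (applyWord σ (List.ofFn (fun k : Fin n => x0 (k.val : ℤ))))[m.toNat]'hlt := by
  unfold applyPoint
  rw [if_pos hm]
  have hlt1 : m.toNat <
      (applyWord σ (List.ofFn (fun k : Fin (m.toNat + 1) => x0 (k.val : ℤ)))).length := by
    have := length_le_applyWord σ hne (List.ofFn (fun k : Fin (m.toNat + 1) => x0 (k.val : ℤ)))
    simp only [List.length_ofFn] at this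
    omega
  rw [List.getD_eq_getElem _ _ hlt1]
  exact (Qword_prefix σ x0 hne hn).getElem hlt1

lemma applyPoint_neg (hne : ∀ a, σ a ≠ []) (m : ℤ) (hm : m < 0) (N : ℕ)
    (hN : (-m).toNat ≤ (applyWord σ (List.ofFn (fun k : Fin N => x0 ((k.val : ℤ) - (N : ℤ))))).length) :
    applyPoint σ x0 m =
      (applyWord σ (List.ofFn (fun k : Fin N => x0 ((k.val : ℤ) - (N : ℤ)))))[
        (applyWord σ (List.ofFn (fun k : Fin N => x0 ((k.val : ℤ) - (N : ℤ))))).length - (-m).toNat]'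
        (by omega) := by
  unfold applyPoint
  rw [if_neg (by omega)]
  have main : ∀ d : B, (applyWord σ (List.ofFn (fun k : Fin (-m).toNat =>
      x0 ((k.val : ℤ) - (((-m).toNat : ℕ) : ℤ))))).getD
      (((applyWord σ (List.ofFn (fun k : Fin (-m).toNat =>
        x0 ((k.val : ℤ) - (((-m).toNat : ℕ) : ℤ))))).length : ℤ) + m).toNat d =
      (applyWord σ (List.ofFn (fun k : Fin N => x0 ((k.val : ℤ) - (N : ℤ)))))[
        (applyWord σ (List.ofFn (fun k : Fin N => x0 ((k.val : ℤ) - (N : ℤ))))).length - (-m).toNat]'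
        (by omega) := by
    intro d
    set PK := applyWord σ (List.ofFn (fun k : Fin (-m).toNat =>
        x0 ((k.val : ℤ) - (((-m).toNat : ℕ) : ℤ)))) with hPK
    have hKlen : (-m).toNat ≤ PK.length := by
      have := length_le_applyWord σ hne (List.ofFn (fun k : Fin (-m).toNat =>
        x0 ((k.val : ℤ) - (((-m).toNat : ℕ) : ℤ))))
      simp only [List.length_ofFn] at this
      rw [hPK]
      omega
    have hidx : (((PK.length : ℤ) + m)).toNat = PK.length - (-m).toNat := by omega
    rw [hidx, List.getD_eq_getElem _ _ (by omega)]
    rcases le_total ((-m).toNat) N with hKN | hNK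
    · exact suffix_getElem_end (Pword_suffix σ x0 hKN) (by omega) hKlen
    · exact (suffix_getElem_end (Pword_suffix σ x0 hNK) (by omega) hN).symm
  exact main _

end PointAux

lemma lang_infix {A : Type*} {X : Set (ℤ → A)} {w' w : List A} (h : w' <:+: w)
    (hw : w ∈ language X) : w' ∈ language X := by
  obtain ⟨pre, suf, hdec⟩ := h
  obtain ⟨x1, hx1, i1, hocc⟩ := hw
  refine ⟨x1, hx1, i1 + pre.length, ?_⟩
  apply List.ext_getElem (by simp)
  intro t h1 h2
  rw [List.getElem_ofFn]
  have hwlen : w.length = pre.length + w'.length + suf.length := by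
    rw [← hdec]; simp; omega
  have h3 : pre.length + t < w.length := by omega
  have h4 : w[pre.length + t]'h3 = x1 (i1 + ((pre.length + t : ℕ) : ℤ)) := by
    conv_lhs => rw [List.getElem_of_eq hocc h3]
    rw [List.getElem_ofFn]
  have h5 : w[pre.length + t]'h3 = w'[t]'h1 := by
    conv_lhs => rw [List.getElem_of_eq hdec.symm h3]
    rw [List.getElem_append_left (by simp; omega), List.getElem_append_right (by simp) ]
    exact getElem_idx_congr (by simp) _
  rw [← h5, h4]
  congr 1
  push_cast
  ring

lemma occ_in_image {A B : Type*} [Nonempty B] (X : Set (ℤ → A)) (σ : A → List B)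
    (hne : ∀ a, σ a ≠ []) (u : List B) (hu : u ∈ language (shiftImage σ X))
    (hune : u ≠ []) :
    ∃ (w : List A) (x y : List B), w ∈ language X ∧ applyWord σ w = x ++ u ++ y ∧ x ≠ [] := by
  obtain ⟨y0, hy0, i, hocc⟩ := hu
  obtain ⟨x0, hx0, k, hk, rfl⟩ := hy0
  have hL : 0 < u.length := List.length_pos_iff.mpr hune
  set c : ℤ := i + k with hc
  set N : ℕ := (1 - c).toNat with hN
  set n : ℕ := (c + u.length).toNat + 1 with hn
  set wP : List A := List.ofFn (fun j : Fin N => x0 ((j.val : ℤ) - (N : ℤ))) with hwP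
  set wQ : List A := List.ofFn (fun j : Fin n => x0 (j.val : ℤ)) with hwQ
  set P : List B := applyWord σ wP with hP
  set Q : List B := applyWord σ wQ with hQ
  have hPlen : N ≤ P.length := by
    have := length_le_applyWord σ hne wP
    rw [← hP] at this
    simp only [hwP, List.length_ofFn] at this
    omega
  have hQlen : n ≤ Q.length := by
    have := length_le_applyWord σ hne wQ
    rw [← hQ] at this
    simp only [hwQ, List.length_ofFn] at this
    omega
  have hP1 : 1 ≤ c + (P.length : ℤ) := by
    have : (1 - c : ℤ) ≤ ((1 - c).toNat : ℤ) := Int.self_le_toNat _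
    omega
  have hQc : c + u.length < (Q.length : ℤ) := by
    have : (c + u.length : ℤ) ≤ ((c + u.length).toNat : ℤ) := Int.self_le_toNat _
    omega
  set offNat : ℕ := (c + (P.length : ℤ)).toNat with hoffNat
  have hoff : (offNat : ℤ) = c + P.length := Int.toNat_of_nonneg (by omega)
  have hWlen : offNat + u.length ≤ (P ++ Q).length := by
    simp only [List.length_append]
    omega
  have key : ∀ t : ℕ, t < u.length → ∀ hw : offNat + t < (P ++ Q).length,
      (P ++ Q)[offNat + t]'hw = applyPoint σ x0 (c + t) := by
    intro t ht hw
    by_cases hm : 0 ≤ c + t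
    · have h1 : P.length ≤ offNat + t := by omega
      rw [List.getElem_append_right h1]
      have hlt : (c + t).toNat < Q.length := by omega
      rw [applyPoint_nonneg σ x0 hne (c + t) hm n (by omega) hlt]
      exact getElem_idx_congr (by omega) _
    · have h1 : offNat + t < P.length := by omega
      rw [List.getElem_append_left h1]
      have hNle : (-(c + t)).toNat ≤ P.length := by omega
      rw [applyPoint_neg σ x0 hne (c + t) (by omega) N hNle]
      have hl' : applyWord σ (List.ofFn fun k : Fin N => x0 ((k.val : ℤ) - (N : ℤ))) = P := by
        rw [hP, hwP]
      have hlen' : (applyWord σ (List.ofFn fun k : Fin N =>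
          x0 ((k.val : ℤ) - (N : ℤ)))).length = P.length := by rw [hl']
      exact ((List.getElem_of_eq hl' _).trans (getElem_idx_congr (by omega) _)).symm
  have hslice : u = ((P ++ Q).drop offNat).take u.length := by
    apply List.ext_getElem
      (by simp only [List.length_take, List.length_drop, List.length_append]; omega)
    intro t h1 h2
    have h3 : offNat + t < (P ++ Q).length := by omega
    have hrhs : (((P ++ Q).drop offNat).take u.length)[t]'h2 = (P ++ Q)[offNat + t]'h3 := by
      simp [List.getElem_take, List.getElem_drop]
    rw [hrhs, key t h1 h3]
    conv_lhs => rw [List.getElem_of_eq hocc h1, List.getElem_ofFn]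
    rw [shiftMap_iterate]
    congr 1
    show i + (t : ℤ) + (k : ℤ) = c + (t : ℤ)
    omega
  refine ⟨wP ++ wQ, (P ++ Q).take offNat, (P ++ Q).drop (offNat + u.length), ?_, ?_, ?_⟩
  · refine ⟨x0, hx0, -(N : ℤ), ?_⟩
    apply List.ext_getElem (by simp)
    intro t h1 h2
    rw [List.getElem_ofFn]
    have h1' : t < N + n := by
      have h1'' := h1
      simp only [List.length_append, hwP, hwQ, List.length_ofFn] at h1''
      exact h1''
    by_cases htN : t < N
    · rw [List.getElem_append_left (by simp only [hwP, List.length_ofFn]; exact htN)]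
      refine (List.getElem_of_eq hwP _).trans ?_
      rw [List.getElem_ofFn]
      congr 1
      show ((t : ℤ) - (N : ℤ)) = -(N : ℤ) + (t : ℤ)
      omega
    · rw [List.getElem_append_right (by simp only [hwP, List.length_ofFn]; omega)]
      refine (List.getElem_of_eq hwQ _).trans ?_
      rw [List.getElem_ofFn]
      congr 1
      show (((t - wP.length : ℕ)) : ℤ) = -(N : ℤ) + (t : ℤ)
      have : wP.length = N := by simp only [hwP, List.length_ofFn]
      omega
  · rw [applyWord_append, ← hP, ← hQ]
    have h3 : (P ++ Q).drop offNat = u ++ (P ++ Q).drop (offNat + u.length) := by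
      conv_lhs => rw [← List.take_append_drop u.length ((P ++ Q).drop offNat)]
      rw [← hslice, List.drop_drop]
      try congr 1
      all_goals omega
    conv_lhs => rw [← List.take_append_drop offNat (P ++ Q), h3]
    rw [List.append_assoc]
  · intro hnil
    have := congrArg List.length hnil
    simp only [List.length_take, List.length_nil] at this
    omega

section UniqAux
variable {A B : Type*} (σ : A → List B) {ℓ : B} (hslp : StronglyLeftProper σ ℓ)
include hslp

lemma ell_not_mem {s : List B} {a : A} (hsuf : s <:+ σ a) (hne : s ≠ σ a) : ℓ ∉ s := by
  obtain ⟨t, ht, hlt⟩ := hslp a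
  rw [ht] at hsuf
  obtain ⟨q, hq⟩ := hsuf
  cases q with
  | nil =>
    rw [List.nil_append] at hq
    exact absurd (by rw [hq, ht]) hne
  | cons q0 q' =>
    rw [List.cons_append] at hq
    injection hq with _ h2
    intro hm
    apply hlt
    rw [← h2]
    exact List.mem_append_right q' hm

lemma p_head {p : List B} {b : A} (hpne : p ≠ []) (hpre : p <+: σ b) :
    ∃ p₀, p = ℓ :: p₀ ∧ ℓ ∉ p₀ := by
  obtain ⟨t, ht, hlt⟩ := hslp b
  obtain ⟨r, hr⟩ := hpre
  cases p with
  | nil => exact absurd rfl hpne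
  | cons p0 p₁ =>
    rw [ht, List.cons_append] at hr
    injection hr with h1 h2
    refine ⟨p₁, by rw [h1], ?_⟩
    intro hm
    apply hlt
    rw [← h2]
    exact List.mem_append_left r hm

lemma mid_head (v : List A) (p₀ : List B) :
    ∃ r, applyWord σ v ++ (ℓ :: p₀) = ℓ :: r := by
  cases v with
  | nil => exact ⟨p₀, by rw [applyWord_nil, List.nil_append]⟩
  | cons c v' =>
    obtain ⟨t, ht⟩ := applyWord_head σ hslp (c :: v') (by simp)
    exact ⟨t ++ (ℓ :: p₀), by rw [ht, List.cons_append]⟩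

end UniqAux

/-- Proposition 3.3, existence and uniqueness of the antecedent. -/
theorem statement_2 {A B : Type*} [Fintype A] [Fintype B] [Nonempty B]
    (X : Set (ℤ → A)) (hX : IsShiftSpace X)
    (σ : A → List B) (ℓ : B)
    (hinj : Function.Injective (applyWord σ))
    (hslp : StronglyLeftProper σ ℓ)
    (u : List B) (hu : u ∈ language (shiftImage σ X)) (hune : u ≠ []) :
    (ℓ ∉ u → ∃ (b : A) (x y : List B), x ≠ [] ∧ σ b = x ++ u ++ y) ∧
    (ℓ ∈ u → ∃! t : List B × List A × List B,
      t.2.1 ∈ language X ∧ u = t.1 ++ applyWord σ t.2.1 ++ t.2.2 ∧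
      ∃ a b : A, (a, b) ∈ extBoth X t.2.1 ∧
        t.1 <:+ σ a ∧ t.1 ≠ σ a ∧ t.2.2 ≠ [] ∧ t.2.2 <+: σ b) := by
  have hne : ∀ a, σ a ≠ [] := slp_ne_nil σ hslp
  constructor
  · intro hl
    obtain ⟨w, xx, yy, hw, heq, hxne⟩ := occ_in_image X σ hne u hu hune
    obtain ⟨b, x', y', hx', hb⟩ := lemma_one σ hslp w xx yy u heq hune hl
    exact ⟨b, x', y', hx', hb⟩
  · intro hl
    obtain ⟨w, xx, yy, hw, heq, hxne⟩ := occ_in_image X σ hne u hu hune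
    obtain ⟨w₁, a, v, b, w₂, s, p, hwdec, hudec, hssuf, hsne, hpne, hppre⟩ :=
      lemma_two σ hslp w xx yy u heq hl hxne
    have hab : (a, b) ∈ extBoth X v := by
      show (a :: (v ++ [b])) ∈ language X
      refine lang_infix ⟨w₁, w₂, ?_⟩ hw
      rw [hwdec]
      simp
    have hv : v ∈ language X := by
      refine lang_infix ⟨w₁ ++ [a], b :: w₂, ?_⟩ hw
      rw [hwdec]
      simp
    refine ⟨(s, v, p), ⟨hv, hudec, a, b, hab, hssuf, hsne, hpne, hppre⟩, ?_⟩
    rintro ⟨s', v', p'⟩ ⟨hv', hu', a', b', hab', hsuf', hsne', hpne', hpre'⟩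
    dsimp only at hv' hu' hab' hsuf' hsne' hpne' hpre'
    have hls : ℓ ∉ s := ell_not_mem σ hslp hssuf hsne
    have hls' : ℓ ∉ s' := ell_not_mem σ hslp hsuf' hsne'
    obtain ⟨p₀, hp₀, hlp₀⟩ := p_head σ hslp hpne hppre
    obtain ⟨p₀', hp₀', hlp₀'⟩ := p_head σ hslp hpne' hpre'
    obtain ⟨r, hr⟩ := mid_head σ hslp v p₀
    obtain ⟨r', hr'⟩ := mid_head σ hslp v' p₀'
    have e1 : u = s ++ (ℓ :: r) := by rw [hudec, List.append_assoc, hp₀, hr]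
    have e2 : u = s' ++ (ℓ :: r') := by rw [hu', List.append_assoc, hp₀', hr']
    obtain ⟨es, er⟩ := uniq_split_first (ℓ := ℓ) s' s r' r hls' hls (e2.symm.trans e1)
    have hmid : applyWord σ v' ++ (ℓ :: p₀') = applyWord σ v ++ (ℓ :: p₀) := by
      rw [hr, hr', er]
    obtain ⟨ev, ep⟩ :=
      uniq_split_last (ℓ := ℓ) (applyWord σ v') p₀' (applyWord σ v) p₀ hlp₀' hlp₀ hmid
    simp only [Prod.mk.injEq]
    exact ⟨es, hinj ev, by rw [hp₀, hp₀', ep]⟩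
end

section
/- Let X be a shift space over A3 = {1,2,3}. For every dendric bispecial factor v ∈ L(X), the sets C^-_X(v) and C^+_X(v) each contain at most one letter. -/
open Classical

/-! ### Auxiliary machinery for statement_11 -/

section AuxConn

variable {A : Type*}

/-- Two edges are linked in one step if both lie in `E` and share a coordinate. -/
def stepE (E : Set (A × A)) (p q : A × A) : Prop :=
  p ∈ E ∧ q ∈ E ∧ (p.1 = q.1 ∨ p.2 = q.2)

/-- Edge-connectivity of `E`. -/
def connE (E : Set (A × A)) : Prop :=
  ∀ p ∈ E, ∀ q ∈ E, Relation.ReflTransGen (stepE E) p q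

/-- `u` is an endpoint of the edge `p`. -/
def IncV (u : A ⊕ A) (p : A × A) : Prop := u = Sum.inl p.1 ∨ u = Sum.inr p.2

lemma mem_pairSupport {E : Set (A × A)} {u : A ⊕ A} :
    u ∈ pairSupport E ↔ ∃ p ∈ E, IncV u p := by
  constructor
  · rintro (⟨a, ⟨b, hab⟩, rfl⟩ | ⟨b, ⟨a, hab⟩, rfl⟩)
    · exact ⟨(a, b), hab, Or.inl rfl⟩
    · exact ⟨(a, b), hab, Or.inr rfl⟩
  · rintro ⟨p, hp, (rfl | rfl)⟩
    · exact Or.inl ⟨p.1, ⟨p.2, hp⟩, rfl⟩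
    · exact Or.inr ⟨p.2, ⟨p.1, hp⟩, rfl⟩

lemma pairGraph_adj' {E : Set (A × A)} {u v : A ⊕ A} (h : (pairGraph E).Adj u v) :
    ∃ p ∈ E, (u = Sum.inl p.1 ∧ v = Sum.inr p.2) ∨ (u = Sum.inr p.2 ∧ v = Sum.inl p.1) := by
  rw [pairGraph, SimpleGraph.fromRel_adj] at h
  obtain ⟨-, h | h⟩ := h
  · obtain ⟨a, b, rfl, rfl, hab⟩ := h
    exact ⟨(a, b), hab, Or.inl ⟨rfl, rfl⟩⟩
  · obtain ⟨a, b, rfl, rfl, hab⟩ := h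
    exact ⟨(a, b), hab, Or.inr ⟨rfl, rfl⟩⟩

lemma adj_pairGraph {E : Set (A × A)} {p : A × A} (hp : p ∈ E) :
    (pairGraph E).Adj (Sum.inl p.1) (Sum.inr p.2) := by
  rw [pairGraph, SimpleGraph.fromRel_adj]
  exact ⟨by simp, Or.inl ⟨p.1, p.2, rfl, rfl, hp⟩⟩

lemma IncV_share {u : A ⊕ A} {p q : A × A} (hp : IncV u p) (hq : IncV u q) :
    p.1 = q.1 ∨ p.2 = q.2 := by
  rcases hp with rfl | rfl <;> rcases hq with h | h
  · exact Or.inl (Sum.inl.inj h)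
  · simp at h
  · simp at h
  · exact Or.inr (Sum.inr.inj h)

lemma walk_rtg {E : Set (A × A)} :
    ∀ {u v : pairSupport E}, ((pairGraph E).induce (pairSupport E)).Walk u v →
      ∀ {p q : A × A}, p ∈ E → q ∈ E → IncV (↑u) p → IncV (↑v) q →
        Relation.ReflTransGen (stepE E) p q := by
  intro u v w
  induction w with
  | nil =>
    intro p q hp hq hup huq
    exact Relation.ReflTransGen.single ⟨hp, hq, IncV_share hup huq⟩
  | @cons x y z h w ih =>
    intro p q hp hq hup hvq
    obtain ⟨r, hr, hcase⟩ := pairGraph_adj' h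
    have hur : IncV (↑x) r := by
      rcases hcase with ⟨h1, _⟩ | ⟨h1, _⟩
      exacts [Or.inl h1, Or.inr h1]
    have hu'r : IncV (↑y) r := by
      rcases hcase with ⟨_, h2⟩ | ⟨_, h2⟩
      exacts [Or.inr h2, Or.inl h2]
    exact Relation.ReflTransGen.head ⟨hp, hr, IncV_share hup hur⟩ (ih hr hq hu'r hvq)

lemma rtg_reach {E : Set (A × A)} {p q : A × A}
    (h : Relation.ReflTransGen (stepE E) p q) :
    ∀ (hp : Sum.inl p.1 ∈ pairSupport E) (hq : Sum.inl q.1 ∈ pairSupport E),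
      ((pairGraph E).induce (pairSupport E)).Reachable ⟨Sum.inl p.1, hp⟩ ⟨Sum.inl q.1, hq⟩ := by
  induction h with
  | refl => intro hp hq; exact SimpleGraph.Reachable.refl _
  | @tail b c hab hbc ih =>
    intro hp hc
    obtain ⟨hbE, hcE, hsh⟩ := hbc
    have hbm : Sum.inl b.1 ∈ pairSupport E := mem_pairSupport.2 ⟨b, hbE, Or.inl rfl⟩
    refine (ih hp hbm).trans ?_
    rcases hsh with h1 | h2
    · have he : (⟨Sum.inl b.1, hbm⟩ : pairSupport E) = ⟨Sum.inl c.1, hc⟩ :=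
        Subtype.ext (show Sum.inl b.1 = Sum.inl c.1 by rw [h1])
      rw [he]
    · have m1 : Sum.inr b.2 ∈ pairSupport E := mem_pairSupport.2 ⟨b, hbE, Or.inr rfl⟩
      have m2 : Sum.inr c.2 ∈ pairSupport E := mem_pairSupport.2 ⟨c, hcE, Or.inr rfl⟩
      have a1 : ((pairGraph E).induce (pairSupport E)).Adj ⟨Sum.inl b.1, hbm⟩ ⟨Sum.inr b.2, m1⟩ :=
        adj_pairGraph hbE
      have a2 : ((pairGraph E).induce (pairSupport E)).Adj ⟨Sum.inl c.1, hc⟩ ⟨Sum.inr c.2, m2⟩ :=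
        adj_pairGraph hcE
      have he : (⟨Sum.inr b.2, m1⟩ : pairSupport E) = ⟨Sum.inr c.2, m2⟩ :=
        Subtype.ext (show Sum.inr b.2 = Sum.inr c.2 by rw [h2])
      refine a1.reachable.trans ?_
      rw [he]
      exact a2.reachable.symm

lemma precon_iff (E : Set (A × A)) :
    ((pairGraph E).induce (pairSupport E)).Preconnected ↔ connE E := by
  constructor
  · intro h p hp q hq
    have hpm : Sum.inl p.1 ∈ pairSupport E := mem_pairSupport.2 ⟨p, hp, Or.inl rfl⟩
    have hqm : Sum.inl q.1 ∈ pairSupport E := mem_pairSupport.2 ⟨q, hq, Or.inl rfl⟩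
    obtain ⟨w⟩ := h ⟨_, hpm⟩ ⟨_, hqm⟩
    exact walk_rtg w hp hq (Or.inl rfl) (Or.inl rfl)
  · intro h u v
    obtain ⟨p, hp, hup⟩ := mem_pairSupport.1 u.2
    obtain ⟨q, hq, hvq⟩ := mem_pairSupport.1 v.2
    have hpm : Sum.inl p.1 ∈ pairSupport E := mem_pairSupport.2 ⟨p, hp, Or.inl rfl⟩
    have hqm : Sum.inl q.1 ∈ pairSupport E := mem_pairSupport.2 ⟨q, hq, Or.inl rfl⟩
    have key := rtg_reach (h p hp q hq) hpm hqm
    have h1 : ((pairGraph E).induce (pairSupport E)).Reachable u ⟨Sum.inl p.1, hpm⟩ := by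
      rcases hup with h' | h'
      · have : u = ⟨Sum.inl p.1, hpm⟩ := Subtype.ext h'
        rw [this]
      · have m1 : Sum.inr p.2 ∈ pairSupport E := mem_pairSupport.2 ⟨p, hp, Or.inr rfl⟩
        have : u = ⟨Sum.inr p.2, m1⟩ := Subtype.ext h'
        rw [this]
        have ha : ((pairGraph E).induce (pairSupport E)).Adj ⟨Sum.inl p.1, hpm⟩ ⟨Sum.inr p.2, m1⟩ :=
          adj_pairGraph hp
        exact ha.reachable.symm
    have h2 : ((pairGraph E).induce (pairSupport E)).Reachable ⟨Sum.inl q.1, hqm⟩ v := by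
      rcases hvq with h' | h'
      · have : v = ⟨Sum.inl q.1, hqm⟩ := Subtype.ext h'
        rw [this]
      · have m1 : Sum.inr q.2 ∈ pairSupport E := mem_pairSupport.2 ⟨q, hq, Or.inr rfl⟩
        have : v = ⟨Sum.inr q.2, m1⟩ := Subtype.ext h'
        rw [this]
        have ha : ((pairGraph E).induce (pairSupport E)).Adj ⟨Sum.inl q.1, hqm⟩ ⟨Sum.inr q.2, m1⟩ :=
          adj_pairGraph hq
        exact ha.reachable
    exact h1.trans (key.trans h2)

end AuxConn

section AuxLang

variable {A : Type*}

lemma occursIn_of_forall {w : List A} {x : ℤ → A} (i : ℤ)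
    (h : ∀ (k : ℕ) (hk : k < w.length), w[k] = x (i + k)) : occursIn w x := by
  refine ⟨i, ?_⟩
  apply List.ext_getElem (by simp)
  intro k h1 h2
  simpa using h k h1

lemma forall_of_occursIn {w : List A} {x : ℤ → A} (h : occursIn w x) :
    ∃ i : ℤ, ∀ (k : ℕ) (hk : k < w.length), w[k] = x (i + k) := by
  obtain ⟨i, hw⟩ := h
  refine ⟨i, fun k hk => ?_⟩
  rw [List.getElem_of_eq hw]
  simp

lemma extBoth_fst {X : Set (ℤ → A)} {v : List A} {a : A} (h : a ∈ extLeft X v) :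
    ∃ b, (a, b) ∈ extBoth X v := by
  obtain ⟨x, hx, hocc⟩ := h
  obtain ⟨i, hi⟩ := forall_of_occursIn hocc
  refine ⟨x (i + (v.length + 1 : ℕ)), x, hx, ?_⟩
  show occursIn (a :: (v ++ [x (i + (v.length + 1 : ℕ))])) x
  apply occursIn_of_forall i
  intro k hk
  have hk2 : k < v.length + 2 := by simp at hk; omega
  match k, hk with
  | 0, hk =>
    have := hi 0 (by simp)
    simpa using this
  | (n + 1), hk =>
    rw [List.getElem_cons_succ]
    rcases Nat.lt_or_ge n v.length with hlt | hge
    · rw [List.getElem_append_left hlt]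
      have h2 : n + 1 < (a :: v).length := by simp; omega
      have := hi (n + 1) h2
      rw [List.getElem_cons_succ] at this
      exact this
    · have hn : n = v.length := by omega
      rw [List.getElem_concat_length hn]
      rw [hn]

lemma extBoth_snd {X : Set (ℤ → A)} {v : List A} {b : A} (h : b ∈ extRight X v) :
    ∃ a, (a, b) ∈ extBoth X v := by
  obtain ⟨x, hx, hocc⟩ := h
  obtain ⟨i, hi⟩ := forall_of_occursIn hocc
  refine ⟨x (i - 1), x, hx, ?_⟩
  show occursIn (x (i - 1) :: (v ++ [b])) x
  apply occursIn_of_forall (i - 1)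
  intro k hk
  match k with
  | 0 => simp
  | (n + 1) =>
    rw [List.getElem_cons_succ]
    have hn : n < (v ++ [b]).length := by
      simp only [List.length_cons] at hk
      omega
    rw [hi n hn]
    congr 1
    push_cast
    ring

lemma extBoth_left {X : Set (ℤ → A)} {v : List A} {a b : A}
    (h : (a, b) ∈ extBoth X v) : a ∈ extLeft X v := by
  obtain ⟨x, hx, hocc⟩ := h
  have hocc' : occursIn (a :: (v ++ [b])) x := hocc
  obtain ⟨i, hi⟩ := forall_of_occursIn hocc'
  refine ⟨x, hx, occursIn_of_forall i ?_⟩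
  intro k hk
  match k, hk with
  | 0, hk =>
    have := hi 0 (by simp)
    simpa using this
  | (n + 1), hk =>
    rw [List.getElem_cons_succ]
    have h2 : n + 1 < (a :: (v ++ [b])).length := by
      simp only [List.length_cons] at hk ⊢
      simp only [List.length_append, List.length_singleton]
      omega
    have := hi (n + 1) h2
    rw [List.getElem_cons_succ] at this
    have hn : n < v.length := by
      simp only [List.length_cons] at hk
      omega
    rw [List.getElem_append_left hn] at this
    exact this

lemma extBoth_right {X : Set (ℤ → A)} {v : List A} {a b : A}
    (h : (a, b) ∈ extBoth X v) : b ∈ extRight X v := by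
  obtain ⟨x, hx, hocc⟩ := h
  have hocc' : occursIn (a :: (v ++ [b])) x := hocc
  obtain ⟨i, hi⟩ := forall_of_occursIn hocc'
  refine ⟨x, hx, occursIn_of_forall (i + 1) ?_⟩
  intro k hk
  have hk2 : k + 1 < (a :: (v ++ [b])).length := by
    simp only [List.length_cons]
    omega
  have := hi (k + 1) hk2
  rw [List.getElem_cons_succ] at this
  rw [this]
  congr 1
  push_cast
  ring

lemma extVertices_eq (X : Set (ℤ → A)) (v : List A) :
    extVertices X v = pairSupport (extBoth X v) := by
  have h1 : extLeft X v = {a | ∃ b, (a, b) ∈ extBoth X v} :=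
    Set.ext fun a => ⟨extBoth_fst, fun ⟨b, hb⟩ => extBoth_left hb⟩
  have h2 : extRight X v = {b | ∃ a, (a, b) ∈ extBoth X v} :=
    Set.ext fun b => ⟨extBoth_snd, fun ⟨a, ha⟩ => extBoth_right ha⟩
  rw [extVertices, pairSupport, h1, h2]

end AuxLang

section AuxComb

lemma third_letter : ∀ a₁ a₂ : Fin 3, a₁ ≠ a₂ →
    ∃ a₃, a₃ ≠ a₁ ∧ a₃ ≠ a₂ ∧ ∀ c : Fin 3, c = a₁ ∨ c = a₂ ∨ c = a₃ := by decide

lemma rtg_cross {E : Set (Fin 3 × Fin 3)} {t : Fin 3} {p q : Fin 3 × Fin 3}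
    (h : Relation.ReflTransGen (stepE E) p q) (hp : p.1 = t) :
    q.1 ≠ t → ∃ r s, r ∈ E ∧ s ∈ E ∧ r.1 = t ∧ s.1 ≠ t ∧ r.2 = s.2 := by
  induction h with
  | refl => intro hq; exact absurd hp hq
  | @tail b c hab hbc ih =>
    intro hq
    by_cases hb : b.1 = t
    · obtain ⟨hbE, hcE, hsh⟩ := hbc
      rcases hsh with h1 | h2
      · exact absurd (h1 ▸ hb) hq
      · exact ⟨b, c, hbE, hcE, hb, hq, h2⟩
    · exact ih hb

lemma rtg_cross' {E : Set (Fin 3 × Fin 3)} {t : Fin 3} {p q : Fin 3 × Fin 3}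
    (h : Relation.ReflTransGen (stepE E) p q) (hp : p.2 = t) :
    q.2 ≠ t → ∃ r s, r ∈ E ∧ s ∈ E ∧ r.2 = t ∧ s.2 ≠ t ∧ r.1 = s.1 := by
  induction h with
  | refl => intro hq; exact absurd hp hq
  | @tail b c hab hbc ih =>
    intro hq
    by_cases hb : b.2 = t
    · obtain ⟨hbE, hcE, hsh⟩ := hbc
      rcases hsh with h1 | h2
      · exact ⟨b, c, hbE, hcE, hb, hq, h1⟩
      · exact absurd (h2 ▸ hb) hq
    · exact ih hb

lemma cut_char {E : Set (Fin 3 × Fin 3)} {a₁ a₂ a₃ : Fin 3}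
    (h21 : a₂ ≠ a₁) (h31 : a₃ ≠ a₁)
    (hall : ∀ c : Fin 3, c = a₁ ∨ c = a₂ ∨ c = a₃)
    (hnc : ¬ connE (delLeft E a₁)) :
    (∃ b, (a₂, b) ∈ E) ∧ (∃ b, (a₃, b) ∈ E) ∧
      ∀ b, ¬ ((a₂, b) ∈ E ∧ (a₃, b) ∈ E) := by
  have hmem : ∀ p ∈ delLeft E a₁, p.1 = a₂ ∨ p.1 = a₃ := by
    rintro p ⟨hpE, hp1⟩
    rcases hall p.1 with h | h | h
    · exact absurd h hp1
    · exact Or.inl h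
    · exact Or.inr h
  by_cases hA : ∃ b, (a₂, b) ∈ E
  · by_cases hB : ∃ b, (a₃, b) ∈ E
    · by_cases hC : ∃ b, (a₂, b) ∈ E ∧ (a₃, b) ∈ E
      · exfalso
        apply hnc
        obtain ⟨b₀, hb2, hb3⟩ := hC
        have m2 : (a₂, b₀) ∈ delLeft E a₁ := ⟨hb2, h21⟩
        have m3 : (a₃, b₀) ∈ delLeft E a₁ := ⟨hb3, h31⟩
        have anchor : ∀ p ∈ delLeft E a₁, (p.1, b₀) ∈ delLeft E a₁ := by
          intro p hp
          rcases hmem p hp with h | h <;> rw [h]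
          exacts [m2, m3]
        intro p hp q hq
        have s1 : stepE (delLeft E a₁) p (p.1, b₀) := ⟨hp, anchor p hp, Or.inl rfl⟩
        have s2 : stepE (delLeft E a₁) (p.1, b₀) (q.1, b₀) :=
          ⟨anchor p hp, anchor q hq, Or.inr rfl⟩
        have s3 : stepE (delLeft E a₁) (q.1, b₀) q := ⟨anchor q hq, hq, Or.inl rfl⟩
        exact Relation.ReflTransGen.head s1
          (Relation.ReflTransGen.head s2 (Relation.ReflTransGen.single s3))
      · exact ⟨hA, hB, fun b hb => hC ⟨b, hb⟩⟩
    · exfalso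
      apply hnc
      intro p hp q hq
      have hp2 : p.1 = a₂ := by
        rcases hmem p hp with h | h
        · exact h
        · exact absurd ⟨p.2, by rw [← h]; exact hp.1⟩ hB
      have hq2 : q.1 = a₂ := by
        rcases hmem q hq with h | h
        · exact h
        · exact absurd ⟨q.2, by rw [← h]; exact hq.1⟩ hB
      exact Relation.ReflTransGen.single ⟨hp, hq, Or.inl (hp2.trans hq2.symm)⟩
  · exfalso
    apply hnc
    intro p hp q hq
    have hp2 : p.1 = a₃ := by
      rcases hmem p hp with h | h
      · exact absurd ⟨p.2, by rw [← h]; exact hp.1⟩ hA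
      · exact h
    have hq2 : q.1 = a₃ := by
      rcases hmem q hq with h | h
      · exact absurd ⟨q.2, by rw [← h]; exact hq.1⟩ hA
      · exact h
    exact Relation.ReflTransGen.single ⟨hp, hq, Or.inl (hp2.trans hq2.symm)⟩

lemma cut_char' {E : Set (Fin 3 × Fin 3)} {a₁ a₂ a₃ : Fin 3}
    (h21 : a₂ ≠ a₁) (h31 : a₃ ≠ a₁)
    (hall : ∀ c : Fin 3, c = a₁ ∨ c = a₂ ∨ c = a₃)
    (hnc : ¬ connE (delRight E a₁)) :
    (∃ b, (b, a₂) ∈ E) ∧ (∃ b, (b, a₃) ∈ E) ∧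
      ∀ b, ¬ ((b, a₂) ∈ E ∧ (b, a₃) ∈ E) := by
  have hmem : ∀ p ∈ delRight E a₁, p.2 = a₂ ∨ p.2 = a₃ := by
    rintro p ⟨hpE, hp1⟩
    rcases hall p.2 with h | h | h
    · exact absurd h hp1
    · exact Or.inl h
    · exact Or.inr h
  by_cases hA : ∃ b, (b, a₂) ∈ E
  · by_cases hB : ∃ b, (b, a₃) ∈ E
    · by_cases hC : ∃ b, (b, a₂) ∈ E ∧ (b, a₃) ∈ E
      · exfalso
        apply hnc
        obtain ⟨b₀, hb2, hb3⟩ := hC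
        have m2 : (b₀, a₂) ∈ delRight E a₁ := ⟨hb2, h21⟩
        have m3 : (b₀, a₃) ∈ delRight E a₁ := ⟨hb3, h31⟩
        have anchor : ∀ p ∈ delRight E a₁, (b₀, p.2) ∈ delRight E a₁ := by
          intro p hp
          rcases hmem p hp with h | h <;> rw [h]
          exacts [m2, m3]
        intro p hp q hq
        have s1 : stepE (delRight E a₁) p (b₀, p.2) := ⟨hp, anchor p hp, Or.inr rfl⟩
        have s2 : stepE (delRight E a₁) (b₀, p.2) (b₀, q.2) :=
          ⟨anchor p hp, anchor q hq, Or.inl rfl⟩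
        have s3 : stepE (delRight E a₁) (b₀, q.2) q := ⟨anchor q hq, hq, Or.inr rfl⟩
        exact Relation.ReflTransGen.head s1
          (Relation.ReflTransGen.head s2 (Relation.ReflTransGen.single s3))
      · exact ⟨hA, hB, fun b hb => hC ⟨b, hb⟩⟩
    · exfalso
      apply hnc
      intro p hp q hq
      have hp2 : p.2 = a₂ := by
        rcases hmem p hp with h | h
        · exact h
        · exact absurd ⟨p.1, by rw [← h]; exact hp.1⟩ hB
      have hq2 : q.2 = a₂ := by
        rcases hmem q hq with h | h
        · exact h
        · exact absurd ⟨q.1, by rw [← h]; exact hq.1⟩ hB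
      exact Relation.ReflTransGen.single ⟨hp, hq, Or.inr (hp2.trans hq2.symm)⟩
  · exfalso
    apply hnc
    intro p hp q hq
    have hp2 : p.2 = a₃ := by
      rcases hmem p hp with h | h
      · exact absurd ⟨p.1, by rw [← h]; exact hp.1⟩ hA
      · exact h
    have hq2 : q.2 = a₃ := by
      rcases hmem q hq with h | h
      · exact absurd ⟨q.1, by rw [← h]; exact hq.1⟩ hA
      · exact h
    exact Relation.ReflTransGen.single ⟨hp, hq, Or.inr (hp2.trans hq2.symm)⟩

lemma key_left {E : Set (Fin 3 × Fin 3)} (hconn : connE E) {a₁ a₂ : Fin 3}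
    (h1 : ¬ connE (delLeft E a₁)) (h2 : ¬ connE (delLeft E a₂)) : a₁ = a₂ := by
  by_contra hne
  obtain ⟨a₃, h31, h32, hall⟩ := third_letter a₁ a₂ hne
  have hall2 : ∀ c : Fin 3, c = a₂ ∨ c = a₁ ∨ c = a₃ := by
    intro c; rcases hall c with h | h | h <;> tauto
  obtain ⟨⟨b2, hb2⟩, ⟨b3, hb3⟩, hd23⟩ :=
    cut_char (Ne.symm hne) h31 hall h1
  obtain ⟨⟨b1, hb1⟩, -, hd13⟩ :=
    cut_char hne h32 hall2 h2
  have hr := hconn (a₃, b3) hb3 (a₂, b2) hb2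
  obtain ⟨r, s, hrE, hsE, hr3, hs3, hrs⟩ :=
    rtg_cross hr rfl (fun h => h32 h.symm)
  have hr3' : r.1 = a₃ := hr3
  have hs3' : s.1 ≠ a₃ := hs3
  rcases hall s.1 with h | h | h
  · exact hd13 r.2 ⟨by rw [← h, hrs]; exact hsE, by rw [← hr3']; exact hrE⟩
  · exact hd23 r.2 ⟨by rw [← h, hrs]; exact hsE, by rw [← hr3']; exact hrE⟩
  · exact hs3' h

lemma key_right {E : Set (Fin 3 × Fin 3)} (hconn : connE E) {a₁ a₂ : Fin 3}
    (h1 : ¬ connE (delRight E a₁)) (h2 : ¬ connE (delRight E a₂)) : a₁ = a₂ := by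
  by_contra hne
  obtain ⟨a₃, h31, h32, hall⟩ := third_letter a₁ a₂ hne
  have hall2 : ∀ c : Fin 3, c = a₂ ∨ c = a₁ ∨ c = a₃ := by
    intro c; rcases hall c with h | h | h <;> tauto
  obtain ⟨⟨b2, hb2⟩, ⟨b3, hb3⟩, hd23⟩ :=
    cut_char' (Ne.symm hne) h31 hall h1
  obtain ⟨⟨b1, hb1⟩, -, hd13⟩ :=
    cut_char' hne h32 hall2 h2
  have hr := hconn (b3, a₃) hb3 (b2, a₂) hb2
  obtain ⟨r, s, hrE, hsE, hr3, hs3, hrs⟩ :=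
    rtg_cross' hr rfl (fun h => h32 h.symm)
  have hr3' : r.2 = a₃ := hr3
  have hs3' : s.2 ≠ a₃ := hs3
  rcases hall s.2 with h | h | h
  · exact hd13 r.1 ⟨by rw [← h, hrs]; exact hsE, by rw [← hr3']; exact hrE⟩
  · exact hd23 r.1 ⟨by rw [← h, hrs]; exact hsE, by rw [← hr3']; exact hrE⟩
  · exact hs3' h

end AuxComb

/-- Lemma 4.3, the sets `C⁻(v)` and `C⁺(v)` contain at most one
letter. -/
theorem statement_11 (X : Set (ℤ → Fin 3)) (hX : IsShiftSpace X) (h3 : ShiftOver3 X)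
    (v : List (Fin 3)) (hv : v ∈ language X) (hden : IsDendric X v)
    (hbi : Bispecial X v) :
    (Cminus X v).Subsingleton ∧ (Cplus X v).Subsingleton := by
  have hden' : ((pairGraph (extBoth X v)).induce (pairSupport (extBoth X v))).IsTree := by
    rw [← extVertices_eq]
    exact hden
  have hconn : connE (extBoth X v) := (precon_iff _).1 hden'.isConnected.preconnected
  constructor
  · intro a₁ h₁ a₂ h₂
    exact key_left hconn (fun hc => h₁ ((precon_iff _).2 hc)) (fun hc => h₂ ((precon_iff _).2 hc))
  · intro a₁ h₁ a₂ h₂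
    exact key_right hconn (fun hc => h₁ ((precon_iff _).2 hc)) (fun hc => h₂ ((precon_iff _).2 hc))
end

section
/- Let T : Ω → Ω be a map and let I2 ⊆ I1 ⊆ Ω. Assume that I1 is recurrent for T and that I2 is recurrent for the induced transformation T_{I1}. Then I2 is recurrent for T, and the transformation induced by T_{I1} on I2 coincides with the transformation induced by T on I2, i.e. (T_{I1})_{I2}(x) = T_{I2}(x) for all x ∈ I2. -/
open Classical

/-- Cumulative return-time sums: `nSum T I x k` is the time of the `k`-th return. -/
noncomputable def nSum {Ω : Type*} (T : Ω → Ω) (I : Set Ω) (x : Ω) : ℕ → ℕ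
  | 0 => 0
  | k + 1 => nSum T I x k + returnTime T I (T^[nSum T I x k] x)

lemma ret_spec {Ω : Type*} {T : Ω → Ω} {I : Set Ω} (h1 : RecurrentSet T I)
    {x : Ω} (hx : x ∈ I) :
    0 < returnTime T I x ∧ T^[returnTime T I x] x ∈ I := by
  obtain ⟨n, hn⟩ := h1 x hx
  exact Nat.sInf_mem (⟨n, hn⟩ : {n | 0 < n ∧ T^[n] x ∈ I}.Nonempty)

lemma nSum_spec {Ω : Type*} {T : Ω → Ω} {I : Set Ω} (h1 : RecurrentSet T I)
    {x : Ω} (hx : x ∈ I) (k : ℕ) :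
    (inducedMap T I)^[k] x = T^[nSum T I x k] x ∧ T^[nSum T I x k] x ∈ I ∧
      k ≤ nSum T I x k := by
  induction k with
  | zero => simpa [nSum] using hx
  | succ k ih =>
    obtain ⟨heq, hmem, hle⟩ := ih
    obtain ⟨hr, hrI⟩ := ret_spec h1 hmem
    refine ⟨?_, ?_, ?_⟩
    · rw [Function.iterate_succ_apply', heq, inducedMap]
      show _ = T^[nSum T I x k + returnTime T I (T^[nSum T I x k] x)] x
      rw [add_comm, Function.iterate_add_apply]
    · show T^[nSum T I x k + returnTime T I (T^[nSum T I x k] x)] x ∈ I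
      rw [add_comm, Function.iterate_add_apply]
      exact hrI
    · show k + 1 ≤ nSum T I x k + returnTime T I (T^[nSum T I x k] x)
      omega

lemma nSum_mono {Ω : Type*} (T : Ω → Ω) (I : Set Ω) (x : Ω) :
    Monotone (nSum T I x) :=
  monotone_nat_of_le_succ fun k => Nat.le_add_right _ _

lemma nSum_succ_shift {Ω : Type*} (T : Ω → Ω) (I : Set Ω) (x : Ω) (k : ℕ) :
    nSum T I x (k + 1) =
      returnTime T I x + nSum T I (T^[returnTime T I x] x) k := by
  induction k with
  | zero => simp [nSum]
  | succ k ih =>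
    show nSum T I x (k + 1) + _ = _ + (nSum T I (T^[returnTime T I x] x) k + _)
    rw [ih, ← add_assoc]
    congr 2
    rw [add_comm, Function.iterate_add_apply]

lemma nSum_surj {Ω : Type*} {T : Ω → Ω} {I : Set Ω} (h1 : RecurrentSet T I) :
    ∀ n : ℕ, ∀ x ∈ I, T^[n] x ∈ I → ∃ k, nSum T I x k = n := by
  intro n
  induction n using Nat.strong_induction_on with
  | _ n ih =>
    intro x hx hnx
    rcases Nat.eq_zero_or_pos n with rfl | hn
    · exact ⟨0, rfl⟩
    · have hr := ret_spec h1 hx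
      set r := returnTime T I x with hrdef
      have hrn : r ≤ n := Nat.sInf_le ⟨hn, hnx⟩
      have hlt : n - r < n := by omega
      have hmem : T^[n - r] (T^[r] x) ∈ I := by
        rw [← Function.iterate_add_apply]
        have : n - r + r = n := by omega
        rw [this]; exact hnx
      obtain ⟨k, hk⟩ := ih (n - r) hlt (T^[r] x) hr.2 hmem
      refine ⟨k + 1, ?_⟩
      rw [nSum_succ_shift, hk]
      omega

/-- Lemma 6.5, composition of induced transformations. -/
theorem statement_19 {Ω : Type*} (T : Ω → Ω) (I₁ I₂ : Set Ω) (h21 : I₂ ⊆ I₁)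
    (h1 : RecurrentSet T I₁) (h2 : RecurrentSet (inducedMap T I₁) I₂) :
    RecurrentSet T I₂ ∧
      ∀ x ∈ I₂, inducedMap (inducedMap T I₁) I₂ x = inducedMap T I₂ x := by
  have key : ∀ x ∈ I₂, ∃ n, 0 < n ∧ T^[n] x ∈ I₂ ∧
      inducedMap (inducedMap T I₁) I₂ x = T^[n] x ∧
      n = returnTime T I₂ x := by
    intro x hx
    have hx1 : x ∈ I₁ := h21 hx
    -- the T-return set to I₂ is nonempty
    obtain ⟨k₀, hk₀, hk₀mem⟩ := h2 x hx
    obtain ⟨heq₀, _, hle₀⟩ := nSum_spec h1 hx1 k₀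
    have hTne : ({n | 0 < n ∧ T^[n] x ∈ I₂}).Nonempty := by
      refine ⟨nSum T I₁ x k₀, by omega, ?_⟩
      rw [← heq₀]; exact hk₀mem
    have htmem := Nat.sInf_mem hTne
    set t := sInf {n | 0 < n ∧ T^[n] x ∈ I₂} with htdef
    obtain ⟨ht, htI₂⟩ := htmem
    -- t = nSum k for some k > 0
    obtain ⟨k, hk⟩ := nSum_surj h1 t x hx1 (h21 htI₂)
    have hkpos : 0 < k := by
      rcases Nat.eq_zero_or_pos k with rfl | h
      · simp [nSum] at hk; omega
      · exact h
    obtain ⟨heqk, _, _⟩ := nSum_spec h1 hx1 k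
    -- the induced-return set is nonempty
    have hindne : ({m | 0 < m ∧ (inducedMap T I₁)^[m] x ∈ I₂}).Nonempty := by
      refine ⟨k, hkpos, ?_⟩
      rw [heqk, hk]; exact htI₂
    have hsmem := Nat.sInf_mem hindne
    set s := sInf {m | 0 < m ∧ (inducedMap T I₁)^[m] x ∈ I₂} with hsdef
    obtain ⟨hs, hsI₂⟩ := hsmem
    have hsk : s ≤ k := Nat.sInf_le ⟨hkpos, by rw [heqk, hk]; exact htI₂⟩
    obtain ⟨heqs, _, hles⟩ := nSum_spec h1 hx1 s
    -- nSum s = t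
    have h1' : t ≤ nSum T I₁ x s := by
      apply Nat.sInf_le
      refine ⟨by omega, ?_⟩
      rw [← heqs]; exact hsI₂
    have h2' : nSum T I₁ x s ≤ t := by
      rw [← hk]; exact nSum_mono T I₁ x hsk
    have hst : nSum T I₁ x s = t := le_antisymm h2' h1'
    refine ⟨t, ht, htI₂, ?_, rfl⟩
    show (inducedMap T I₁)^[s] x = T^[t] x
    rw [heqs, hst]
  constructor
  · intro x hx
    obtain ⟨n, hn, hnmem, _, _⟩ := key x hx
    exact ⟨n, hn, hnmem⟩
  · intro x hx
    obtain ⟨n, _, _, heq, hn⟩ := key x hx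
    rw [heq, inducedMap, ← hn]
end
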